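/- arXiv:1708.03316 — 8 statements merged into one kernel-verified Lean document; each statement's English description precedes it below -/
import Mathlib

section
/- For each n ≥ 0 and each integer d with |d| ≤ n, the Catalan number c_n satisfies c_n = Σ_{a,b ≥ 0, a+b ≤ n, a−b = d} c_{n−b}^a · c_{n−a}^b, where c_n^k = C(n+k, k) − C(n+k, k−1) are the truncated Catalan (ballot) numbers. In particular the right-hand side is independent of d. -/
def cc (n : ℕ) (k : ℤ) : ℤ :=
  if 0 ≤ k ∧ k ≤ (n : ℤ) then
    ((n + k.toNat).choose k.toNat : ℤ) -
      (if k = 0 then 0 else ((n + k.toNat).choose (k.toNat - 1) : ℤ))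
  else 0

lemma cc_of_neg {n : ℕ} {k : ℤ} (h : k < 0) : cc n k = 0 := by
  rw [cc, if_neg (by omega)]

lemma cc_of_gt {n : ℕ} {k : ℤ} (h : (n : ℤ) < k) : cc n k = 0 := by
  rw [cc, if_neg (by omega)]

lemma cc_zero (n : ℕ) : cc n 0 = 1 := by simp [cc]

lemma cc_coe_pos (n k : ℕ) (hk : 1 ≤ k) (h : k ≤ n) :
    cc n (k : ℤ) = ((n + k).choose k : ℤ) - ((n + k).choose (k - 1) : ℤ) := by
  rw [cc, if_pos (by omega), if_neg (by omega)]
  simp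

/-- The Pascal-type recurrence for ballot numbers. -/
lemma cc_rec (m k : ℕ) (hk : 1 ≤ k) (hkm : k ≤ m + 1) :
    cc (m + 1) (k : ℤ) = cc m (k : ℤ) + cc (m + 1) ((k : ℤ) - 1) := by
  have hk1 : (k : ℤ) - 1 = ((k - 1 : ℕ) : ℤ) := by omega
  rw [hk1]
  rcases Nat.lt_or_ge m k with hmk | hmk
  · -- k = m + 1
    have hkm1 : k = m + 1 := by omega
    subst hkm1
    rw [show cc m ((m+1 : ℕ) : ℤ) = 0 from cc_of_gt (by exact_mod_cast Nat.lt_succ_self m), zero_add]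
    rcases Nat.eq_zero_or_pos m with rfl | hm
    · norm_num [cc]
    · obtain ⟨m', rfl⟩ : ∃ m', m = m' + 1 := ⟨m - 1, by omega⟩
      rw [cc_coe_pos (m'+1+1) (m'+1+1) (by omega) le_rfl]
      rw [show m'+1+1-1 = m'+1 from rfl]
      rw [cc_coe_pos (m'+1+1) (m'+1) (by omega) (by omega)]
      simp only [Nat.add_sub_cancel]
      have p1 : (2*m'+3+1).choose (m'+1+1)
          = (2*m'+3).choose (m'+1) + (2*m'+3).choose (m'+1+1) := Nat.choose_succ_succ' _ _
      have p2 : (2*m'+3+1).choose (m'+1)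
          = (2*m'+3).choose m' + (2*m'+3).choose (m'+1) := Nat.choose_succ_succ' _ _
      have p3 : (2*(m'+1)+1).choose (m'+1+1) = (2*(m'+1)+1).choose (m'+1) :=
        Nat.choose_symm_half (m'+1)
      have e1 : m'+1+1 + (m'+1+1) = 2*m'+3+1 := by ring
      have e2 : m'+1+1 + (m'+1) = 2*m'+3 := by ring
      have e3 : 2*(m'+1)+1 = 2*m'+3 := by ring
      rw [e1, e2]
      rw [e3] at p3
      push_cast
      omega
  · -- k ≤ m
    obtain ⟨j, rfl⟩ : ∃ j, k = j + 1 := ⟨k - 1, by omega⟩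
    rw [cc_coe_pos (m+1) (j+1) (by omega) (by omega),
      cc_coe_pos m (j+1) (by omega) (by omega)]
    simp only [Nat.add_sub_cancel]
    rcases Nat.eq_zero_or_pos j with rfl | hj
    · simp only [Nat.add_zero, Nat.zero_add, Nat.cast_zero, cc_zero]
      have p1 : (m+1+1).choose (0+1) = (m+1).choose 0 + (m+1).choose (0+1) :=
        Nat.choose_succ_succ' _ _
      have e1 : m + 1 + (0+1) = m + 1 + 1 := by ring
      have e2 : m + (0+1) = m + 1 := by ring
      rw [e1, e2]
      norm_num [Nat.choose_one_right] at p1 ⊢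
    · obtain ⟨i, rfl⟩ : ∃ i, j = i + 1 := ⟨j - 1, by omega⟩
      rw [cc_coe_pos (m+1) (i+1) (by omega) (by omega)]
      simp only [Nat.add_sub_cancel]
      have e1 : m + 1 + (i+1+1) = m+i+2+1 := by ring
      have e2 : m + (i+1+1) = m+i+2 := by ring
      have e3 : m + 1 + (i+1) = m+i+2 := by ring
      rw [e1, e2, e3]
      have p1 : (m+i+2+1).choose (i+1+1)
          = (m+i+2).choose (i+1) + (m+i+2).choose (i+1+1) := Nat.choose_succ_succ' _ _
      have p2 : (m+i+2+1).choose (i+1)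
          = (m+i+2).choose i + (m+i+2).choose (i+1) := Nat.choose_succ_succ' _ _
      push_cast
      omega
/-- `cc` with an integer first argument (zero when negative). -/
def ccz (m k : ℤ) : ℤ := if 0 ≤ m then cc m.toNat k else 0

lemma ccz_coe (n : ℕ) (k : ℤ) : ccz (n : ℤ) k = cc n k := by
  simp [ccz]

lemma ccz_of_neg {m k : ℤ} (h : k < 0) : ccz m k = 0 := by
  unfold ccz; split
  · exact cc_of_neg h
  · rfl

lemma ccz_of_lt {m k : ℤ} (h : m < k) : ccz m k = 0 := by
  unfold ccz; split
  · exact cc_of_gt (by omega)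
  · rfl

lemma ccz_zero {m : ℤ} (h : 0 ≤ m) : ccz m 0 = 1 := by
  rw [ccz, if_pos h, cc_zero]

lemma ccz_rec {m k : ℤ} (h1 : 1 ≤ k) (h2 : k ≤ m) : ccz m k = ccz (m - 1) k + ccz m (k - 1) := by
  lift m to ℕ using (by omega) with M
  lift k to ℕ using (by omega) with K
  obtain ⟨M', rfl⟩ : ∃ M', M = M' + 1 := ⟨M - 1, by omega⟩
  have e : ((M' + 1 : ℕ) : ℤ) - 1 = ((M' : ℕ) : ℤ) := by push_cast; ring
  rw [e, ccz_coe, ccz_coe, ccz_coe]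
  exact cc_rec M' K (by exact_mod_cast h1) (by exact_mod_cast h2)

section Telescope

variable (n : ℕ)

def Tf (a b : ℤ) : ℤ := ccz ((n : ℤ) - b) a * ccz ((n : ℤ) - a) b

def Uf (a b : ℤ) : ℤ := ccz ((n : ℤ) - b - 1) a * ccz ((n : ℤ) - a) b

lemma key (a b : ℤ) (ha : 1 ≤ a) (hb : 0 ≤ b) (hne : ¬(a = (n : ℤ) + 1 ∧ b = 0)) :
    Tf n a b - Tf n (a - 1) b = Uf n a b - Uf n (a - 1) (b - 1) := by
  rcases le_or_gt ((n : ℤ) + 2) (a + b) with h1 | h1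
  · -- everything vanishes
    rw [Tf, Tf, Uf, Uf,
      ccz_of_lt (show (n : ℤ) - b < a by omega),
      ccz_of_lt (show (n : ℤ) - b < a - 1 by omega),
      ccz_of_lt (show (n : ℤ) - b - 1 < a by omega),
      ccz_of_lt (show (n : ℤ) - (b - 1) - 1 < a - 1 by omega)]
    ring
  rcases eq_or_lt_of_le (show a + b ≤ (n : ℤ) + 1 by omega) with h2 | h2
  · -- boundary diagonal `a + b = n + 1`
    have hb1 : 1 ≤ b := by
      rcases eq_or_lt_of_le hb with hb0 | hb0
      · exact absurd ⟨by omega, hb0.symm⟩ hne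
      · omega
    rw [Tf, Tf, Uf, Uf,
      ccz_of_lt (show (n : ℤ) - b < a by omega),
      ccz_of_lt (show (n : ℤ) - b - 1 < a by omega)]
    have e1 : (n : ℤ) - (a - 1) = b := by omega
    have e2 : (n : ℤ) - (b - 1) - 1 = n - b := by ring
    have e3 : (n : ℤ) - b = a - 1 := by omega
    rw [e1, e2, e3]
    have : ccz b b = ccz b (b - 1) := by
      rw [ccz_rec (show (1:ℤ) ≤ b from hb1) (le_refl b), ccz_of_lt (by omega), zero_add]
    rw [this]
  · -- main case `a + b ≤ n`
    have hab : a + b ≤ (n : ℤ) := by omega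
    rw [Tf, Tf, Uf, Uf]
    rw [ccz_rec ha (show a ≤ (n : ℤ) - b by omega)]
    have e2 : (n : ℤ) - (b - 1) - 1 = n - b := by ring
    rw [e2]
    rcases eq_or_lt_of_le hb with hb0 | hb0
    · -- b = 0
      subst hb0
      rw [ccz_zero (show (0:ℤ) ≤ (n : ℤ) - a by omega),
        ccz_zero (show (0:ℤ) ≤ (n : ℤ) - (a - 1) by omega),
        ccz_of_neg (show (0:ℤ) - 1 < 0 by norm_num)]
      ring
    · -- 1 ≤ b
      have hb1 : (1:ℤ) ≤ b := by omega
      rw [ccz_rec (m := (n : ℤ) - (a - 1)) hb1 (by omega)]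
      rw [show (n : ℤ) - (a - 1) - 1 = (n : ℤ) - a by ring]
      ring

end Telescope
def Sf (n : ℕ) (d : ℤ) : ℤ := ∑ b ∈ Finset.range (n + 1), Tf n ((b : ℤ) + d) (b : ℤ)

lemma Uf_congr (n : ℕ) {a b a' b' : ℤ} (h1 : a = a') (h2 : b = b') : Uf n a b = Uf n a' b' := by
  rw [h1, h2]

lemma Tf_congr (n : ℕ) {a b a' b' : ℤ} (h1 : a = a') (h2 : b = b') : Tf n a b = Tf n a' b' := by
  rw [h1, h2]

lemma Sf_step (n : ℕ) (d : ℤ) (hd0 : 0 ≤ d) (hdn : d + 1 ≤ (n : ℤ)) :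
    Sf n (d + 1) = Sf n d := by
  have h : Sf n (d + 1) - Sf n d = 0 := by
    rw [Sf, Sf, ← Finset.sum_sub_distrib]
    have hcongr : ∀ b ∈ Finset.range (n + 1),
        Tf n ((b : ℤ) + (d + 1)) (b : ℤ) - Tf n ((b : ℤ) + d) (b : ℤ)
          = (fun i : ℕ => Uf n ((i : ℤ) + d) ((i : ℤ) - 1)) (b + 1)
            - (fun i : ℕ => Uf n ((i : ℤ) + d) ((i : ℤ) - 1)) b := by
      intro b _
      have hk := key n ((b : ℤ) + d + 1) (b : ℤ) (by omega) (by positivity)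
        (by rintro ⟨h1, h2⟩; omega)
      simp only []
      rw [Tf_congr n (show (b : ℤ) + (d + 1) = (b : ℤ) + d + 1 by ring) rfl,
        Tf_congr n (show (b : ℤ) + d = ((b : ℤ) + d + 1) - 1 by ring) rfl, hk]
      congr 1
      · exact Uf_congr n (by push_cast; ring) (by push_cast; ring)
      · exact Uf_congr n (by push_cast; ring) (by push_cast; ring)
    rw [Finset.sum_congr rfl hcongr,
      Finset.sum_range_sub (fun i : ℕ => Uf n ((i : ℤ) + d) ((i : ℤ) - 1))]
    have z1 : Uf n (((n + 1 : ℕ) : ℤ) + d) (((n + 1 : ℕ) : ℤ) - 1) = 0 := by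
      rw [Uf, ccz_of_lt (m := (n : ℤ) - (((n + 1 : ℕ) : ℤ) - 1) - 1)
        (k := ((n + 1 : ℕ) : ℤ) + d) (by push_cast; omega), zero_mul]
    have z2 : Uf n (((0 : ℕ) : ℤ) + d) (((0 : ℕ) : ℤ) - 1) = 0 := by
      rw [Uf, ccz_of_neg (m := (n : ℤ) - (((0 : ℕ) : ℤ) + d))
        (k := ((0 : ℕ) : ℤ) - 1) (by norm_num), mul_zero]
    rw [z1, z2, sub_zero]
  linarith [h]

lemma cc_catalan (n : ℕ) : cc n (n : ℤ) = (catalan n : ℤ) := by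
  rcases Nat.eq_zero_or_pos n with rfl | hn
  · simp [cc]
  · rw [cc_coe_pos n n (by omega) le_rfl]
    have key1 : (2*n).choose (n - 1) = (2*n).choose (n + 1) := by
      rw [← Nat.choose_symm (show n + 1 ≤ 2*n by omega)]
      congr 1
      omega
    have key2 : (2*n).choose (n + 1) * (n + 1) = (2*n).choose n * n := by
      have := Nat.choose_succ_right_eq (2*n) n
      rwa [show 2*n - n = n by omega] at this
    have key3 : (n + 1) * catalan n = (2*n).choose n :=
      succ_mul_catalan_eq_centralBinom n
    have hcast1 : ((2*n).choose (n-1) : ℤ) * (n + 1) = ((2*n).choose n : ℤ) * n := by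
      rw [key1]; exact_mod_cast congrArg (Nat.cast (R := ℤ)) key2
    have hcast3 : ((n : ℤ) + 1) * (catalan n : ℤ) = ((2*n).choose n : ℤ) := by
      exact_mod_cast congrArg (Nat.cast (R := ℤ)) key3
    have hne : ((n : ℤ) + 1) ≠ 0 := by positivity
    apply mul_left_cancel₀ hne
    rw [show n + n = 2*n by ring]
    linear_combination -hcast1 - hcast3
lemma Sf_top (n : ℕ) : Sf n (n : ℤ) = (catalan n : ℤ) := by
  rw [Sf, Finset.sum_eq_single 0]
  · rw [Tf_congr n (show ((0:ℕ) : ℤ) + (n : ℤ) = (n : ℤ) by norm_num)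
      (show ((0:ℕ) : ℤ) = 0 by norm_num)]
    rw [Tf, ccz_zero (by omega), mul_one,
      show (n : ℤ) - 0 = (n : ℤ) by ring, ccz_coe, cc_catalan]
  · intro b _ hb
    have hb1 : 1 ≤ b := Nat.one_le_iff_ne_zero.mpr hb
    rw [Tf, ccz_of_lt (show (n : ℤ) - (b : ℤ) < (b : ℤ) + (n : ℤ) by omega), zero_mul]
  · intro h
    exact absurd (Finset.mem_range.mpr (by omega)) h

lemma Sf_const (n : ℕ) (d : ℤ) (h0 : 0 ≤ d) (hn : d ≤ (n : ℤ)) : Sf n d = (catalan n : ℤ) := by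
  have main : ∀ t : ℕ, t ≤ n → Sf n ((n : ℤ) - t) = (catalan n : ℤ) := by
    intro t
    induction t with
    | zero => intro _; simpa using Sf_top n
    | succ t ih =>
      intro ht
      have := Sf_step n ((n : ℤ) - (t + 1 : ℕ)) (by push_cast; omega) (by push_cast; omega)
      rw [show (n : ℤ) - (t + 1 : ℕ) + 1 = (n : ℤ) - t by push_cast; ring] at this
      rw [← this] at *
      exact ih (by omega)
  have := main (n - d.toNat) (by omega)
  rwa [show (n : ℤ) - ((n - d.toNat : ℕ) : ℤ) = d by omega] at this

lemma Tf_eq_cc (n : ℕ) (a b : ℕ) (ha : a ≤ n) (hb : b ≤ n) :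
    Tf n (a : ℤ) (b : ℤ) = cc (n - b) (a : ℤ) * cc (n - a) (b : ℤ) := by
  rw [Tf, show (n : ℤ) - (b : ℤ) = ((n - b : ℕ) : ℤ) by omega,
    show (n : ℤ) - (a : ℤ) = ((n - a : ℕ) : ℤ) by omega, ccz_coe, ccz_coe]

lemma sum_eq_Sf (n : ℕ) (d : ℤ) (hd0 : 0 ≤ d) (hdn : d ≤ (n : ℤ)) :
    ∑ p ∈ (Finset.range (n + 1) ×ˢ Finset.range (n + 1)).filter
        (fun p => p.1 + p.2 ≤ n ∧ (p.1 : ℤ) - (p.2 : ℤ) = d),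
      cc (n - p.2) (p.1 : ℤ) * cc (n - p.1) (p.2 : ℤ) = Sf n d := by
  rw [Sf]
  rw [← Finset.sum_filter_of_ne (p := fun b : ℕ => 2 * (b : ℤ) + d ≤ (n : ℤ))
    (f := fun b : ℕ => Tf n ((b : ℤ) + d) (b : ℤ))
    (fun b _ hne => by
      by_contra hgt
      refine hne ?_
      show Tf n ((b : ℤ) + d) (b : ℤ) = 0
      rw [Tf, ccz_of_lt (show (n:ℤ) - (b:ℤ) < (b:ℤ) + d by omega), zero_mul])]
  refine Finset.sum_nbij' (fun p => p.2) (fun b => (((b : ℤ) + d).toNat, b)) ?_ ?_ ?_ ?_ ?_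
  · intro p hp
    simp only [Finset.mem_filter, Finset.mem_product, Finset.mem_range] at hp ⊢
    omega
  · intro b hb
    simp only [Finset.mem_filter, Finset.mem_product, Finset.mem_range] at hb ⊢
    omega
  · intro p hp
    simp only [Finset.mem_filter, Finset.mem_product, Finset.mem_range] at hp
    have : ((p.1 : ℤ)) = (p.2 : ℤ) + d := by omega
    ext
    · simp only []
      omega
    · rfl
  · intro b hb
    rfl
  · intro p hp
    simp only [Finset.mem_filter, Finset.mem_product, Finset.mem_range] at hp
    obtain ⟨⟨h1, h2⟩, h3, h4⟩ := hp
    rw [Tf_congr n (show ((p.2 : ℤ) + d) = (p.1 : ℤ) by omega) rfl,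
      Tf_eq_cc n p.1 p.2 (by omega) (by omega)]

lemma sum_symm (n : ℕ) (d : ℤ) :
    ∑ p ∈ (Finset.range (n + 1) ×ˢ Finset.range (n + 1)).filter
        (fun p => p.1 + p.2 ≤ n ∧ (p.1 : ℤ) - (p.2 : ℤ) = d),
      cc (n - p.2) (p.1 : ℤ) * cc (n - p.1) (p.2 : ℤ)
    = ∑ p ∈ (Finset.range (n + 1) ×ˢ Finset.range (n + 1)).filter
        (fun p => p.1 + p.2 ≤ n ∧ (p.1 : ℤ) - (p.2 : ℤ) = -d),
      cc (n - p.2) (p.1 : ℤ) * cc (n - p.1) (p.2 : ℤ) := by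
  refine Finset.sum_nbij' (fun p => p.swap) (fun p => p.swap) ?_ ?_ ?_ ?_ ?_
  · intro p hp
    simp only [Finset.mem_filter, Finset.mem_product, Finset.mem_range, Prod.fst_swap,
      Prod.snd_swap] at hp ⊢
    omega
  · intro p hp
    simp only [Finset.mem_filter, Finset.mem_product, Finset.mem_range, Prod.fst_swap,
      Prod.snd_swap] at hp ⊢
    omega
  · intro p _; rfl
  · intro p _; rfl
  · intro p _
    simp only [Prod.fst_swap, Prod.snd_swap]
    ring

theorem catalan_eq_sum_truncated (n : ℕ) (d : ℤ) (hd : |d| ≤ (n : ℤ)) :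
    (catalan n : ℤ) =
      ∑ p ∈ (Finset.range (n + 1) ×ˢ Finset.range (n + 1)).filter
          (fun p => p.1 + p.2 ≤ n ∧ (p.1 : ℤ) - (p.2 : ℤ) = d),
        cc (n - p.2) (p.1 : ℤ) * cc (n - p.1) (p.2 : ℤ) := by
  have habs := abs_le.mp hd
  rcases le_or_gt 0 d with h0 | h0
  · rw [sum_eq_Sf n d h0 (by omega), Sf_const n d h0 (by omega)]
  · rw [sum_symm n d, sum_eq_Sf n (-d) (by omega) (by omega),
      Sf_const n (-d) (by omega) (by omega)]
end

section
/- For all 0 ≤ k < n, the truncated Catalan numbers satisfy c_{n+1}^k = Σ_{j=0}^{k} c_j · c_{n−j}^{k−j}, where c_j is the j-th Catalan number. -/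
lemma cc_neg (n : ℕ) (z : ℤ) (h : z < 0) : cc n z = 0 := by
  simp only [cc, if_neg (by omega : ¬(0 ≤ z ∧ z ≤ (n:ℤ)))]

lemma cc_gt (n : ℕ) (z : ℤ) (h : (n : ℤ) < z) : cc n z = 0 := by
  simp only [cc, if_neg (by omega : ¬(0 ≤ z ∧ z ≤ (n:ℤ)))]

lemma cc_eval (n k : ℕ) (h2 : k + 1 ≤ n) :
    cc n ((k:ℤ)+1) = (((n + (k+1)).choose (k+1)) : ℤ) - ((n + (k+1)).choose k : ℤ) := by
  have h1 : ((k:ℤ)+1) = ((k+1 : ℕ) : ℤ) := by push_cast; ring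
  rw [h1]
  rw [cc, if_pos (by exact ⟨by positivity, by exact_mod_cast h2⟩),
    if_neg (by exact_mod_cast Nat.succ_ne_zero k : ((k+1:ℕ):ℤ) ≠ 0), Int.toNat_natCast]
  simp

lemma cc_diag (m : ℕ) : cc m (m : ℤ) = catalan m := by
  cases m with
  | zero => simpa using cc_zero 0
  | succ k =>
    have h := cc_eval (k+1) k le_rfl
    have h1 : (2*k+2).choose (k+1) * (k+1) = (2*k+2).choose k * (k+2) := by
      have := Nat.choose_succ_right_eq (2*k+2) k
      rw [this, show 2*k+2-k = k+2 by omega]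
    have h2 : (k + 2) * catalan (k+1) = (2*k+2).choose (k+1) := by
      have := succ_mul_catalan_eq_centralBinom (k+1)
      rw [Nat.centralBinom, show 2*(k+1) = 2*k+2 by ring] at this
      exact this
    have h1' : ((2*k+2).choose (k+1) : ℤ) * ((k:ℤ)+1) = ((2*k+2).choose k : ℤ) * ((k:ℤ)+2) := by
      exact_mod_cast h1
    have h2' : ((k:ℤ) + 2) * (catalan (k+1) : ℤ) = ((2*k+2).choose (k+1) : ℤ) := by
      exact_mod_cast h2
    rw [show (k+1) + (k+1) = 2*k+2 by ring] at h
    have key : ((k:ℤ)+2) * cc (k+1) ((k:ℤ)+1) = ((k:ℤ)+2) * (catalan (k+1) : ℤ) := by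
      rw [h]; linear_combination h1' - h2'
    have := mul_left_cancel₀ (by positivity : ((k:ℤ)+2) ≠ 0) key
    rw [show (((k+1:ℕ)):ℤ) = (k:ℤ)+1 by push_cast; ring, this]

lemma cc_pascal (m k : ℕ) (h : k ≤ m) :
    cc (m+1) ((k:ℤ)+1) = cc (m+1) (k:ℤ) + cc m ((k:ℤ)+1) := by
  rcases Nat.lt_or_ge k m with hlt | hge
  · rw [cc_eval (m+1) k (by omega), cc_eval m k (by omega)]
    cases k with
    | zero =>
      simp [cc_zero, Nat.choose_one_right]
      omega
    | succ j =>
      rw [show (((j+1:ℕ)):ℤ) = (j:ℤ)+1 by push_cast; ring, cc_eval (m+1) j (by omega)]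
      rw [show m+1+(j+1+1) = (m+j+2)+1 by omega, show m+1+(j+1) = m+j+2 by omega,
        show m+(j+1+1) = m+j+2 by omega,
        Nat.choose_succ_succ (m+j+2) (j+1), Nat.choose_succ_succ (m+j+2) j]
      push_cast
      ring
  · have hk : k = m := le_antisymm h hge
    subst hk
    rw [cc_gt k ((k:ℤ)+1) (by exact_mod_cast lt_add_one _), add_zero]
    have L : cc (k+1) ((k:ℤ)+1) = catalan (k+1) := by
      have := cc_diag (k+1)
      rwa [show (((k+1:ℕ)):ℤ) = (k:ℤ)+1 by push_cast; ring] at this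
    have R : cc (k+1) (k:ℤ) = (catalan (k+1) : ℤ) := by
      cases k with
      | zero => simpa [catalan_one] using cc_zero 1
      | succ j =>
        have hsym : (2*j+3).choose (j+2) = (2*j+3).choose (j+1) := by
          have := Nat.choose_symm (show j+1 ≤ 2*j+3 by omega)
          rw [show 2*j+3-(j+1) = j+2 by omega] at this
          exact this
        have hd := cc_diag (j+2)
        rw [show (((j+2:ℕ)):ℤ) = ((j+1:ℤ))+1 by push_cast; ring] at hd
        rw [show ((j+1:ℤ)) = ((j+1:ℕ):ℤ) by push_cast; ring] at hd
        rw [cc_eval (j+2) (j+1) le_rfl] at hd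
        rw [show (j+2)+(j+1+1) = (2*j+3)+1 by omega,
          Nat.choose_succ_succ (2*j+3) (j+1), Nat.choose_succ_succ (2*j+3) j] at hd
        rw [show (((j+1:ℕ)):ℤ) = (j:ℤ)+1 by push_cast; ring, cc_eval (j+2) j (by omega)]
        rw [show (j+2)+(j+1) = 2*j+3 by omega]
        rw [show j+1+1 = j+2 by omega] at hd ⊢
        push_cast [hsym] at hd ⊢
        simp only [Nat.succ_eq_add_one, show j+1+1=j+2 by omega] at hd ⊢
        omega
    rw [L, R]

lemma cc_aux : ∀ n : ℕ, ∀ k : ℕ, k ≤ n + 1 →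
    cc (n + 1) (k : ℤ) =
      ∑ j ∈ Finset.range (k + 1), (catalan j : ℤ) * cc (n - j) ((k : ℤ) - (j : ℤ)) := by
  intro n
  induction n with
  | zero =>
    intro k hk
    interval_cases k
    · simp [cc_zero]
    · have a : cc 1 (1:ℤ) = 1 := by have := cc_diag 1; simpa [catalan_one] using this
      have b : cc 0 (1:ℤ) = 0 := cc_gt 0 1 (by norm_num)
      simp [Finset.sum_range_succ, a, b, cc_zero, catalan_one]
  | succ n ihn =>
    intro k
    induction k with
    | zero => intro _; simp [cc_zero]
    | succ k ihk =>
      intro hk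
      rw [show ((k+1:ℕ):ℤ) = (k:ℤ)+1 by push_cast; ring]
      rcases Nat.lt_or_ge (k+1) (n+2) with hlt | hge
      · have pas : cc (n+1+1) ((k:ℤ)+1) = cc (n+1+1) (k:ℤ) + cc (n+1) ((k:ℤ)+1) :=
          cc_pascal (n+1) k (by omega)
        have h1 := ihk (by omega)
        have h2 := ihn (k+1) (by omega)
        rw [show ((k+1:ℕ):ℤ) = (k:ℤ)+1 by push_cast; ring] at h2
        have key : ∀ j ∈ Finset.range (k+1+1),
            (catalan j : ℤ) * cc (n+1-j) ((k:ℤ)+1-(j:ℤ)) =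
              (catalan j : ℤ) * cc (n+1-j) ((k:ℤ)-(j:ℤ)) +
                (catalan j : ℤ) * cc (n-j) ((k:ℤ)+1-(j:ℤ)) := by
          intro j hj
          simp only [Finset.mem_range] at hj
          rcases Nat.lt_or_ge j (k+1) with hj' | hj'
          · have hp := cc_pascal (n-j) (k-j) (by omega)
            rw [show (n-j)+1 = n+1-j by omega,
              show ((k-j:ℕ):ℤ) = (k:ℤ)-(j:ℤ) by omega] at hp
            rw [show (k:ℤ)+1-(j:ℤ) = (k:ℤ)-(j:ℤ)+1 by ring]
            linear_combination (catalan j : ℤ) * hp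
          · have hj2 : j = k+1 := by omega
            subst hj2
            rw [cc_neg (n+1-(k+1)) ((k:ℤ)-((k+1:ℕ):ℤ)) (by omega),
              show (k:ℤ)+1-((k+1:ℕ):ℤ) = 0 by push_cast; ring, cc_zero, cc_zero]
            ring
        rw [Finset.sum_congr rfl key, Finset.sum_add_distrib]
        have s1 : ∑ j ∈ Finset.range (k+1+1), (catalan j:ℤ) * cc (n+1-j) ((k:ℤ)-(j:ℤ))
            = cc (n+1+1) (k:ℤ) := by
          rw [Finset.sum_range_succ,
            cc_neg (n+1-(k+1)) ((k:ℤ)-((k+1:ℕ):ℤ)) (by omega), mul_zero, add_zero, ← h1]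
        have s2 : ∑ j ∈ Finset.range (k+1+1), (catalan j:ℤ) * cc (n-j) ((k:ℤ)+1-(j:ℤ))
            = cc (n+1) ((k:ℤ)+1) := by rw [← h2]
        rw [s1, s2, pas]
      · have hk2 : k = n+1 := by omega
        subst hk2
        have L : cc (n+1+1) (((n+1:ℕ):ℤ)+1) = catalan (n+2) := by
          have := cc_diag (n+2)
          rwa [show (((n+2:ℕ)):ℤ) = ((n+1:ℕ):ℤ)+1 by push_cast; ring,
            show (n+2) = n+1+1 by omega] at this
        rw [L, Finset.sum_range_succ]
        rw [show n+1-(n+1+1) = 0 by omega,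
          show ((n+1:ℕ):ℤ)+1-((n+1+1:ℕ):ℤ) = 0 by push_cast; ring, cc_zero,
          show (n+1+1) = n+2 by omega]
        have rest : ∑ j ∈ Finset.range (n+1+1), (catalan j:ℤ) * cc (n+1-j) (((n+1:ℕ):ℤ)+1-(j:ℤ)) = 0 := by
          apply Finset.sum_eq_zero
          intro j hj
          simp only [Finset.mem_range] at hj
          rw [cc_gt (n+1-j) (((n+1:ℕ):ℤ)+1-(j:ℤ)) (by omega), mul_zero]
        rw [rest, mul_one, zero_add]

theorem truncated_catalan_recursion (n k : ℕ) (h : k < n) :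
    cc (n + 1) (k : ℤ) =
      ∑ j ∈ Finset.range (k + 1), (catalan j : ℤ) * cc (n - j) ((k : ℤ) - (j : ℤ)) := by
  exact cc_aux n k (by omega)
end

section
/- For every n ≥ 0 and m ∈ {0,1}, the determinant of the (n+1)×(n+1) Hankel matrix whose (i,j)-entry is the Catalan number c_{m+i+j} (indices i,j from 0 to n) equals 1. -/
open Finset

/-- `hkW N j = C(N,j) - C(N,j+1)` as an integer. -/
def hkW (N j : ℕ) : ℤ := (Nat.choose N j : ℤ) - Nat.choose N (j + 1)

lemma hkW_rec (N j : ℕ) :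
    hkW (N + 2) (j + 2) = hkW N j + 2 * hkW N (j + 1) + hkW N (j + 2) := by
  unfold hkW
  have h1 : Nat.choose (N + 2) (j + 2)
      = Nat.choose N j + 2 * Nat.choose N (j + 1) + Nat.choose N (j + 2) := by
    rw [Nat.choose_succ_succ (N + 1) (j + 1), Nat.choose_succ_succ N j,
      Nat.choose_succ_succ N (j + 1)]
    ring
  have h2 : Nat.choose (N + 2) (j + 3)
      = Nat.choose N (j + 1) + 2 * Nat.choose N (j + 2) + Nat.choose N (j + 3) := by
    rw [Nat.choose_succ_succ (N + 1) (j + 2), Nat.choose_succ_succ N (j + 1),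
      Nat.choose_succ_succ N (j + 2)]
    ring
  push_cast [h1, h2]
  ring

/-- The central catalan difference formula. -/
lemma hk_catalan_eq (n : ℕ) :
    (Nat.choose (2 * n) n : ℤ) - Nat.choose (2 * n) (n + 1) = catalan n := by
  have h := Nat.choose_succ_right_eq (2 * n) n
  have h2 : 2 * n - n = n := by omega
  rw [h2] at h
  have hc := succ_mul_catalan_eq_centralBinom n
  have hcb : Nat.centralBinom n = Nat.choose (2 * n) n := rfl
  rw [hcb] at hc
  have hne : ((n : ℤ) + 1) ≠ 0 := by positivity
  apply mul_left_cancel₀ hne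
  have h' : (Nat.choose (2 * n) (n + 1) : ℤ) * (n + 1) = Nat.choose (2 * n) n * n := by
    exact_mod_cast congrArg (Nat.cast : ℕ → ℤ) h
  have hc' : ((n : ℤ) + 1) * catalan n = Nat.choose (2 * n) n := by
    exact_mod_cast congrArg (Nat.cast : ℕ → ℤ) hc
  linear_combination -h' - hc'

section Generic

variable (b : ℕ → ℕ → ℤ) (c : ℤ)

/-- Shift lemma: moving one transfer-step from the left factor to the right factor. -/
lemma hk_shift
    (hrec : ∀ i k, b (i + 1) (k + 1) = b i k + 2 * b i (k + 1) + b i (k + 2))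
    (hb0 : ∀ i, b (i + 1) 0 = c * b i 0 + b i 1)
    (hz : ∀ i k, i < k → b i k = 0)
    (i j N : ℕ) (hi : i + 2 ≤ N) (hj : j + 2 ≤ N) :
    ∑ k ∈ range N, b (i + 1) k * b j k = ∑ k ∈ range N, b i k * b (j + 1) k := by
  obtain ⟨P, rfl⟩ : ∃ P, N = P + 2 := ⟨N - 2, by omega⟩
  have A : ∑ k ∈ range (P + 1), b i (k + 2) * b j (k + 1) + b i 1 * b j 0
      = ∑ k ∈ range (P + 1), b i (k + 1) * b j k := by
    rw [Finset.sum_range_succ' (fun k => b i (k + 1) * b j k) P,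
      Finset.sum_range_succ (fun k => b i (k + 2) * b j (k + 1)) P,
      hz i (P + 2) (by omega)]
    ring
  have B : ∑ k ∈ range (P + 1), b i (k + 1) * b j (k + 2) + b i 0 * b j 1
      = ∑ k ∈ range (P + 1), b i k * b j (k + 1) := by
    rw [Finset.sum_range_succ' (fun k => b i k * b j (k + 1)) P,
      Finset.sum_range_succ (fun k => b i (k + 1) * b j (k + 2)) P,
      hz j (P + 2) (by omega)]
    ring
  rw [Finset.sum_range_succ' (fun k => b (i + 1) k * b j k) (P + 1),
    Finset.sum_range_succ' (fun k => b i k * b (j + 1) k) (P + 1),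
    hb0 i, hb0 j]
  simp only [hrec]
  have expandL : ∑ k ∈ range (P + 1),
        (b i k + 2 * b i (k + 1) + b i (k + 2)) * b j (k + 1)
      = (∑ k ∈ range (P + 1), b i k * b j (k + 1))
        + 2 * (∑ k ∈ range (P + 1), b i (k + 1) * b j (k + 1))
        + ∑ k ∈ range (P + 1), b i (k + 2) * b j (k + 1) := by
    rw [Finset.mul_sum, ← Finset.sum_add_distrib, ← Finset.sum_add_distrib]
    exact Finset.sum_congr rfl fun k _ => by ring
  have expandR : ∑ k ∈ range (P + 1),
        b i (k + 1) * (b j k + 2 * b j (k + 1) + b j (k + 2))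
      = (∑ k ∈ range (P + 1), b i (k + 1) * b j k)
        + 2 * (∑ k ∈ range (P + 1), b i (k + 1) * b j (k + 1))
        + ∑ k ∈ range (P + 1), b i (k + 1) * b j (k + 2) := by
    rw [Finset.mul_sum, ← Finset.sum_add_distrib, ← Finset.sum_add_distrib]
    exact Finset.sum_congr rfl fun k _ => by ring
  rw [expandL, expandR]
  linear_combination A - B

/-- Stability: the sum does not depend on the (large enough) cut-off. -/
lemma hk_stab (hz : ∀ i k, i < k → b i k = 0) (i j N : ℕ) (hN : i < N) :
    ∑ k ∈ range N, b i k * b j k = ∑ k ∈ range (i + 1), b i k * b j k := by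
  rw [← Finset.sum_subset (Finset.range_subset_range.2 hN)]
  intro x hx hx'
  rw [hz i x (by simp only [Finset.mem_range] at hx hx' ⊢; omega), zero_mul]

/-- The convolution identity. -/
lemma hk_conv (m : ℕ)
    (hrec : ∀ i k, b (i + 1) (k + 1) = b i k + 2 * b i (k + 1) + b i (k + 2))
    (hb0 : ∀ i, b (i + 1) 0 = c * b i 0 + b i 1)
    (hz : ∀ i k, i < k → b i k = 0)
    (hb00 : b 0 0 = 1)
    (hbase : ∀ j, b j 0 = catalan (j + m)) :
    ∀ i j N, i < N → ∑ k ∈ range N, b i k * b j k = catalan (i + j + m) := by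
  have key : ∀ i j, ∑ k ∈ range (i + j + 2), b i k * b j k = catalan (i + j + m) := by
    intro i
    induction i with
    | zero =>
      intro j
      rw [hk_stab b hz 0 j (0 + j + 2) (by omega), Finset.sum_range_one, hb00, one_mul,
        hbase j]
      rw [show 0 + j + m = j + m by omega]
    | succ i ih =>
      intro j
      rw [hk_shift b c hrec hb0 hz i j (i + 1 + j + 2) (by omega) (by omega),
        show i + 1 + j + 2 = i + (j + 1) + 2 by omega, ih (j + 1),
        show i + (j + 1) + m = i + 1 + j + m by omega]
  intro i j N hN
  rw [hk_stab b hz i j N hN, ← hk_stab b hz i j (i + j + 2) (by omega), key i j]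

end Generic

/-- Given a suitable triangular family `b`, the Hankel determinant is `1`. -/
lemma hk_main (n m : ℕ) (b : ℕ → ℕ → ℤ) (c : ℤ)
    (hrec : ∀ i k, b (i + 1) (k + 1) = b i k + 2 * b i (k + 1) + b i (k + 2))
    (hb0 : ∀ i, b (i + 1) 0 = c * b i 0 + b i 1)
    (hz : ∀ i k, i < k → b i k = 0)
    (hdiag : ∀ i, b i i = 1)
    (hbase : ∀ j, b j 0 = catalan (j + m)) :
    Matrix.det (Matrix.of fun i j : Fin (n + 1) =>
      (catalan (m + (i : ℕ) + (j : ℕ)) : ℤ)) = 1 := by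
  set L : Matrix (Fin (n + 1)) (Fin (n + 1)) ℤ :=
    Matrix.of fun i k : Fin (n + 1) => b i k with hLdef
  have hL : L.det = 1 := by
    rw [Matrix.det_of_lowerTriangular L ?ht]
    · simp only [hLdef, Matrix.of_apply, hdiag]
      simp
    · intro i j hij
      exact hz i j (by simpa using hij)
  have hH : (Matrix.of fun i j : Fin (n + 1) =>
      (catalan (m + (i : ℕ) + (j : ℕ)) : ℤ)) = L * L.transpose := by
    ext i j
    simp only [Matrix.mul_apply, Matrix.transpose_apply, hLdef, Matrix.of_apply]
    rw [Fin.sum_univ_eq_sum_range (fun k => b i k * b j k) (n + 1)]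
    rw [hk_conv b c m hrec hb0 hz (hdiag 0) hbase i j (n + 1) i.isLt,
      show (i : ℕ) + j + m = m + i + j by omega]
  rw [hH, Matrix.det_mul, Matrix.det_transpose, hL, one_mul]

/-- The even-length ballot numbers. -/
def hkB0 (i k : ℕ) : ℤ := hkW (2 * i) (i + k)

/-- The odd-length ballot numbers. -/
def hkB1 (i k : ℕ) : ℤ := hkW (2 * i + 1) (i + k + 1)

theorem hankel_catalan_det (n m : ℕ) (hm : m = 0 ∨ m = 1) :
    Matrix.det (Matrix.of fun i j : Fin (n + 1) =>
      (catalan (m + (i : ℕ) + (j : ℕ)) : ℤ)) = 1 := by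
  rcases hm with rfl | rfl
  · apply hk_main n 0 hkB0 1
    · intro i k
      unfold hkB0
      rw [show 2 * (i + 1) = 2 * i + 2 by ring, show i + 1 + (k + 1) = i + k + 2 by ring,
        show i + (k + 1) = i + k + 1 by ring, show i + (k + 2) = i + k + 2 by ring]
      exact hkW_rec (2 * i) (i + k)
    · intro i
      show hkW (2 * i + 2) (i + 1) = 1 * hkW (2 * i) i + hkW (2 * i) (i + 1)
      unfold hkW
      have h1 : Nat.choose (2 * i + 2) (i + 1)
          = 2 * (Nat.choose (2 * i) i + Nat.choose (2 * i) (i + 1)) := by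
        rw [Nat.choose_succ_succ (2 * i + 1) i, ← Nat.choose_symm_half i,
          Nat.choose_succ_succ (2 * i) i]
        ring
      have h2 : Nat.choose (2 * i + 2) (i + 2)
          = Nat.choose (2 * i) i + 2 * Nat.choose (2 * i) (i + 1)
            + Nat.choose (2 * i) (i + 2) := by
        rw [Nat.choose_succ_succ (2 * i + 1) (i + 1), Nat.choose_succ_succ (2 * i) i,
          Nat.choose_succ_succ (2 * i) (i + 1)]
        ring
      push_cast [h1, h2]
      ring
    · intro i k hik
      unfold hkB0 hkW
      rw [Nat.choose_eq_zero_of_lt (by omega), Nat.choose_eq_zero_of_lt (by omega)]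
      simp
    · intro i
      unfold hkB0 hkW
      rw [show i + i = 2 * i by omega, Nat.choose_self,
        Nat.choose_eq_zero_of_lt (by omega)]
      simp
    · intro j
      show hkW (2 * j) (j + 0) = (catalan (j + 0) : ℤ)
      rw [Nat.add_zero]
      exact hk_catalan_eq j
  · apply hk_main n 1 hkB1 2
    · intro i k
      unfold hkB1
      rw [show 2 * (i + 1) + 1 = 2 * i + 1 + 2 by ring,
        show i + 1 + (k + 1) + 1 = i + k + 1 + 2 by ring,
        show i + (k + 1) + 1 = i + k + 1 + 1 by ring,
        show i + (k + 2) + 1 = i + k + 1 + 2 by ring]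
      exact hkW_rec (2 * i + 1) (i + k + 1)
    · intro i
      show hkW (2 * i + 3) (i + 2) = 2 * hkW (2 * i + 1) (i + 1) + hkW (2 * i + 1) (i + 2)
      unfold hkW
      have h1 : Nat.choose (2 * i + 3) (i + 2)
          = 3 * Nat.choose (2 * i + 1) (i + 1) + Nat.choose (2 * i + 1) (i + 2) := by
        rw [Nat.choose_succ_succ (2 * i + 2) (i + 1), Nat.choose_succ_succ (2 * i + 1) i,
          ← Nat.choose_symm_half i, Nat.choose_succ_succ (2 * i + 1) (i + 1)]
        ring
      have h2 : Nat.choose (2 * i + 3) (i + 3)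
          = Nat.choose (2 * i + 1) (i + 1) + 2 * Nat.choose (2 * i + 1) (i + 2)
            + Nat.choose (2 * i + 1) (i + 3) := by
        rw [Nat.choose_succ_succ (2 * i + 2) (i + 2), Nat.choose_succ_succ (2 * i + 1) (i + 1),
          Nat.choose_succ_succ (2 * i + 1) (i + 2)]
        ring
      push_cast [h1, h2]
      ring
    · intro i k hik
      unfold hkB1 hkW
      rw [Nat.choose_eq_zero_of_lt (by omega), Nat.choose_eq_zero_of_lt (by omega)]
      simp
    · intro i
      unfold hkB1 hkW
      rw [show i + i + 1 = 2 * i + 1 by omega, Nat.choose_self,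
        Nat.choose_eq_zero_of_lt (by omega)]
      simp
    · intro j
      show hkW (2 * j + 1) (j + 0 + 1) = (catalan (j + 1) : ℤ)
      rw [Nat.add_zero]
      unfold hkW
      have h1 : Nat.choose (2 * j + 2) (j + 1)
          = 2 * Nat.choose (2 * j + 1) (j + 1) := by
        rw [Nat.choose_succ_succ (2 * j + 1) j, ← Nat.choose_symm_half j]
        ring
      have h2 : Nat.choose (2 * j + 2) (j + 2)
          = Nat.choose (2 * j + 1) (j + 1) + Nat.choose (2 * j + 1) (j + 2) :=
        Nat.choose_succ_succ (2 * j + 1) (j + 1)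
      have h3 := hk_catalan_eq (j + 1)
      rw [show 2 * (j + 1) = 2 * j + 2 by ring, show (j + 1) + 1 = j + 2 by ring] at h3
      rw [h1, h2] at h3
      push_cast at h3 ⊢
      linarith
end

section
/- Define noncommutative polynomials C̲_n in two noncommuting variables x₀, x₁ over ℤ by C̲_0 = 1 and C̲_{n+1} = Σ_{k=0}^{n} C̲_k · x₀ · C̲_{n−k} · x₁. Then also C̲_{n+1} = Σ_{k=0}^{n} x₀ · C̲_k · x₁ · C̲_{n−k} for all n ≥ 0. -/
noncomputable abbrev x₀ : FreeAlgebra ℤ (Fin 2) := FreeAlgebra.ι ℤ 0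
noncomputable abbrev x₁ : FreeAlgebra ℤ (Fin 2) := FreeAlgebra.ι ℤ 1

lemma sum_triangle_reindex {M : Type*} [AddCommMonoid M] (g : ℕ → ℕ → M) :
    ∀ n, ∑ k ∈ Finset.range n, ∑ j ∈ Finset.range (k+1), g j (k-j)
        = ∑ a ∈ Finset.range n, ∑ b ∈ Finset.range (n-a), g a b := by
  intro n
  induction n with
  | zero => simp
  | succ n ih =>
    rw [Finset.sum_range_succ, ih]
    have h1 : ∀ a ∈ Finset.range n, ∑ b ∈ Finset.range (n+1-a), g a b
        = ∑ b ∈ Finset.range (n-a), g a b + g a (n-a) := by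
      intro a ha
      have ha' : a < n := Finset.mem_range.mp ha
      have : n+1-a = (n-a)+1 := by omega
      rw [this, Finset.sum_range_succ]
    have h2 : ∑ a ∈ Finset.range (n+1), ∑ b ∈ Finset.range (n+1-a), g a b
        = (∑ a ∈ Finset.range n, ∑ b ∈ Finset.range (n-a), g a b)
          + ∑ a ∈ Finset.range (n+1), g a (n-a) := by
      rw [Finset.sum_range_succ, Finset.sum_congr rfl h1, Finset.sum_add_distrib,
        Finset.sum_range_succ (fun a => g a (n-a))]
      have h3 : n + 1 - n = 1 := by omega
      have h4 : n - n = 0 := by omega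
      rw [h3, h4, Finset.sum_range_one, add_assoc]
    rw [h2]

theorem underline_catalan_other_recursion (C : ℕ → FreeAlgebra ℤ (Fin 2))
    (h0 : C 0 = 1)
    (hrec : ∀ n, C (n + 1) = ∑ k ∈ Finset.range (n + 1), C k * x₀ * C (n - k) * x₁) :
    ∀ n, C (n + 1) = ∑ k ∈ Finset.range (n + 1), x₀ * C k * x₁ * C (n - k) := by
  intro n
  induction n using Nat.strong_induction_on with
  | _ n ih =>
    match n with
    | 0 => simp [hrec, h0]
    | Nat.succ m =>
      show C (m+1+1) = ∑ k ∈ Finset.range (m+1+1), x₀ * C k * x₁ * C (m+1-k)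
      rw [hrec]
      rw [Finset.sum_range_succ']
      simp only [Nat.sub_zero, h0, one_mul]
      -- now: ∑ i ∈ range (m+1), C (i+1) * x₀ * C (m+1-(i+1)) * x₁ + x₀ * C (m+1) * x₁
      have hL : ∀ i ∈ Finset.range (m+1),
          C (i+1) * x₀ * C (m+1-(i+1)) * x₁
          = ∑ j ∈ Finset.range (i+1),
              x₀ * C j * x₁ * C (i-j) * x₀ * C (m-i) * x₁ := by
        intro i hi
        have hi' : i < m + 1 := Finset.mem_range.mp hi
        have : m + 1 - (i+1) = m - i := by omega
        rw [this, ih i hi', Finset.sum_mul, Finset.sum_mul, Finset.sum_mul]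
      rw [Finset.sum_congr rfl hL]
      have hR : ∀ k ∈ Finset.range (m+1),
          x₀ * C k * x₁ * C (m+1-k)
          = ∑ b ∈ Finset.range (m+1-k),
              x₀ * C k * x₁ * (C b * x₀ * C (m-k-b) * x₁) := by
        intro k hk
        have hk' : k < m + 1 := Finset.mem_range.mp hk
        have h4 : m + 1 - k = (m - k) + 1 := by omega
        rw [h4, hrec, Finset.mul_sum]
      conv_rhs => rw [Finset.sum_range_succ, Finset.sum_congr rfl hR]
      have key := sum_triangle_reindex
        (fun a b => x₀ * C a * x₁ * (C b * x₀ * C (m - a - b) * x₁)) (m+1)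
      have hL2 : ∀ i ∈ Finset.range (m+1),
          (∑ j ∈ Finset.range (i+1), x₀ * C j * x₁ * C (i-j) * x₀ * C (m-i) * x₁)
          = ∑ j ∈ Finset.range (i+1),
              x₀ * C j * x₁ * (C (i-j) * x₀ * C (m - j - (i-j)) * x₁) := by
        intro i hi
        have hi' : i < m + 1 := Finset.mem_range.mp hi
        refine Finset.sum_congr rfl fun j hj => ?_
        have hj' : j < i + 1 := Finset.mem_range.mp hj
        have : m - j - (i - j) = m - i := by omega
        rw [this]
        simp only [mul_assoc]
      rw [Finset.sum_congr rfl hL2, key]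
      simp [h0, mul_assoc]
end

section
/- Define polynomials c_n^k(q) ∈ ℤ[q] by c_n^0(q) = 1 and the recursion c_{n+1}^k(q) = Σ_{i=0}^{k} c_i^i(q) · q^{k−i} · c_{n−i}^{k−i}(q) for 0 ≤ k ≤ n (with c_{n+1}^{n+1}(q) := c_{n+1}^n(q)). Then for m ∈ {0,1} and n ≥ 0, the determinant of the (n+1)×(n+1) matrix with (i,j)-entry c_{i+j+m}^{i+j+m}(q) equals q^{n(n+1)(4n−1+6m)/6}. -/
open Polynomial Finset

theorem myPascal (c : ℕ → ℕ → Polynomial ℤ)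
    (h0 : ∀ n, c n 0 = 1)
    (hrec : ∀ n k, k ≤ n →
      c (n + 1) k = ∑ i ∈ Finset.range (k + 1), c i i * X ^ (k - i) * c (n - i) (k - i))
    (htop : ∀ n, c (n + 1) (n + 1) = c (n + 1) n) :
    ∀ a k, c (a + k + 2) (k + 1) = c (a + k + 1) (k + 1) + X ^ (a + 1) * c (a + k + 2) k := by
  intro a
  induction a with
  | zero =>
    intro k
    have e1 := hrec (k + 1) (k + 1) le_rfl
    have e2 := hrec k k le_rfl
    have e3 := hrec (k + 1) k (by omega)
    have htk := htop k
    simp only [zero_add]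
    rw [htk, e1, e2, e3, Finset.sum_range_succ]
    have hlast : c (k + 1) (k + 1) * X ^ (k + 1 - (k + 1)) * c (k + 1 - (k + 1)) (k + 1 - (k + 1))
        = c (k + 1) (k + 1) := by
      simp [h0]
    rw [hlast, htk, e2]
    have hmain : ∑ i ∈ Finset.range (k + 1), c i i * X ^ (k + 1 - i) * c (k + 1 - i) (k + 1 - i)
        = X ^ 1 * ∑ i ∈ Finset.range (k + 1), c i i * X ^ (k - i) * c (k + 1 - i) (k - i) := by
      rw [Finset.mul_sum]
      refine Finset.sum_congr rfl ?_
      intro i hi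
      have hik : i ≤ k := by simpa using Nat.lt_succ_iff.mp (Finset.mem_range.mp hi)
      have h1 : k + 1 - i = (k - i) + 1 := by omega
      have h2 : c (k + 1 - i) (k + 1 - i) = c (k + 1 - i) (k - i) := by
        rw [h1]
        have := htop (k - i)
        rw [show k - i + 1 = k + 1 - i by omega] at this
        rw [show (k-i)+1 = k + 1 - i by omega]
        exact this
      rw [h2, h1, pow_succ]
      ring
    rw [hmain]
    ring
  | succ a ih =>
    intro k
    have e1 := hrec (a + k + 2) (k + 1) (by omega)
    have e2 := hrec (a + k + 1) (k + 1) (by omega)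
    have e3 := hrec (a + k + 2) k (by omega)
    rw [show a + 1 + k + 2 = a + k + 2 + 1 by omega,
        show a + 1 + k + 1 = a + k + 1 + 1 by omega] at *
    rw [e1, e2, e3]
    rw [Finset.sum_range_succ, Finset.sum_range_succ (fun i => c i i * X ^ (k + 1 - i) * c (a + k + 1 - i) (k + 1 - i))]
    have hl1 : c (k+1) (k+1) * X ^ (k + 1 - (k+1)) * c (a + k + 2 - (k+1)) (k + 1 - (k+1))
        = c (k+1) (k+1) := by
      rw [show a + k + 2 - (k+1) = a + 1 by omega, show k + 1 - (k+1) = 0 by omega]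
      simp [h0]
    have hl2 : c (k+1) (k+1) * X ^ (k + 1 - (k+1)) * c (a + k + 1 - (k+1)) (k + 1 - (k+1))
        = c (k+1) (k+1) := by
      rw [show a + k + 1 - (k+1) = a by omega, show k + 1 - (k+1) = 0 by omega]
      simp [h0]
    rw [hl1, hl2]
    have hmain : ∑ i ∈ Finset.range (k + 1), c i i * X ^ (k + 1 - i) * c (a + k + 2 - i) (k + 1 - i)
        = (∑ i ∈ Finset.range (k + 1), c i i * X ^ (k + 1 - i) * c (a + k + 1 - i) (k + 1 - i))
          + X ^ (a + 1 + 1) * ∑ i ∈ Finset.range (k + 1), c i i * X ^ (k - i) * c (a + k + 2 - i) (k - i) := by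
      rw [Finset.mul_sum, ← Finset.sum_add_distrib]
      refine Finset.sum_congr rfl ?_
      intro i hi
      have hik : i ≤ k := by simpa using Nat.lt_succ_iff.mp (Finset.mem_range.mp hi)
      have key := ih (k - i)
      rw [show a + (k - i) + 2 = a + k + 2 - i by omega,
          show a + (k - i) + 1 = a + k + 1 - i by omega,
          show k - i + 1 = k + 1 - i by omega] at key
      rw [key]
      rw [show k + 1 - i = (k - i) + 1 by omega]
      ring
    rw [hmain]
    ring

theorem myCut (c : ℕ → ℕ → Polynomial ℤ)
    (h0 : ∀ n, c n 0 = 1)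
    (hrec : ∀ n k, k ≤ n →
      c (n + 1) k = ∑ i ∈ Finset.range (k + 1), c i i * X ^ (k - i) * c (n - i) (k - i))
    (htop : ∀ n, c (n + 1) (n + 1) = c (n + 1) n) :
    ∀ l d, c (l + d) (l + d) =
      ∑ r ∈ Finset.range (l / 2 + 1),
        c (l - r) r * X ^ ((l - 2 * r).choose 2) * c (l + d - r) (d + r) := by
  have pas := myPascal c h0 hrec htop
  have hc : ∀ s : ℕ, (s + 1).choose 2 = s.choose 2 + s := by
    intro s
    rw [Nat.choose_succ_succ, Nat.choose_one_right, Nat.add_comm]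
  intro l
  induction l with
  | zero => intro d; simp [h0]
  | succ l ihl =>
    intro d
    have IH := ihl (d + 1)
    conv_lhs => rw [show l + 1 + d = l + (d + 1) by omega, IH]
    rcases Nat.even_or_odd l with ⟨h, rfl⟩ | ⟨h, rfl⟩
    · -- l = h + h
      rw [show (h + h) / 2 = h by omega, show (h + h + 1) / 2 = h by omega]
      have hBG : ∀ r, r < h →
          c (h + h - r) r * X ^ ((h + h - 2 * r).choose 2) * c (h + h + (d + 1) - r) (d + 1 + r)
          = c (h + h - r) r * X ^ ((h + h - 2 * r).choose 2) * c (h + h + d - r) (d + 1 + r)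
            + c (h + h - r) r * X ^ ((h + h - 2 * r).choose 2 + (h + h - 2 * r)) * c (h + h + 1 + d - r) (d + r) := by
        intro r hr
        have p := pas (h + h - 2 * r - 1) (d + r)
        rw [show h + h - 2 * r - 1 + (d + r) + 2 = h + h + (d + 1) - r by omega,
            show h + h - 2 * r - 1 + (d + r) + 1 = h + h + d - r by omega,
            show h + h - 2 * r - 1 + 1 = h + h - 2 * r by omega,
            show d + r + 1 = d + 1 + r by omega] at p
        rw [p, show h + h + (d + 1) - r = h + h + 1 + d - r by omega, pow_add]
        ring
      have hBh :
          c (h + h - h) h * X ^ ((h + h - 2 * h).choose 2) * c (h + h + (d + 1) - h) (d + 1 + h)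
          = c (h + h - h) h * X ^ ((h + h - 2 * h).choose 2 + (h + h - 2 * h)) * c (h + h + 1 + d - h) (d + h) := by
        have ht := htop (d + h)
        rw [show h + h + (d + 1) - h = d + h + 1 by omega, show d + 1 + h = d + h + 1 by omega, ht,
            show h + h - 2 * h = 0 by omega, show h + h + 1 + d - h = d + h + 1 by omega]
        norm_num
      have hA0 :
          c (h + h + 1 - 0) 0 * X ^ ((h + h + 1 - 2 * 0).choose 2) * c (h + h + 1 + d - 0) (d + 0)
          = c (h + h - 0) 0 * X ^ ((h + h - 2 * 0).choose 2 + (h + h - 2 * 0)) * c (h + h + 1 + d - 0) (d + 0) := by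
        simp only [Nat.sub_zero, Nat.mul_zero]
        rw [h0, h0, show h + h + 1 = (h + h) + 1 by omega, hc]
      have hAr : ∀ r, r < h →
          c (h + h + 1 - (r + 1)) (r + 1) * X ^ ((h + h + 1 - 2 * (r + 1)).choose 2) * c (h + h + 1 + d - (r + 1)) (d + (r + 1))
          = c (h + h - (r + 1)) (r + 1) * X ^ ((h + h - 2 * (r + 1)).choose 2 + (h + h - 2 * (r + 1))) * c (h + h + 1 + d - (r + 1)) (d + (r + 1))
            + c (h + h - r) r * X ^ ((h + h - 2 * r).choose 2) * c (h + h + d - r) (d + 1 + r) := by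
        intro r hr
        have p := pas (h + h - 2 * r - 2) r
        rw [show h + h - 2 * r - 2 + r + 2 = h + h - r by omega,
            show h + h - 2 * r - 2 + r + 1 = h + h - (r + 1) by omega] at p
        set s := h + h - 2 * (r + 1) with hs
        rw [show h + h - 2 * r - 2 + 1 = s + 1 by omega] at p
        rw [show h + h + 1 - (r + 1) = h + h - r by omega,
            show h + h + 1 - 2 * (r + 1) = s + 1 by omega,
            show h + h - 2 * r = s + 1 + 1 by omega,
            show h + h + 1 + d - (r + 1) = h + h + d - r by omega,
            show d + (r + 1) = d + 1 + r by omega,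
            p, hc (s + 1), hc s, pow_add, pow_add, pow_add]
        ring
      conv_lhs => rw [Finset.sum_range_succ]
      conv_rhs => rw [Finset.sum_range_succ']
      have hL : ∑ r ∈ Finset.range h,
            c (h + h - r) r * X ^ ((h + h - 2 * r).choose 2) * c (h + h + (d + 1) - r) (d + 1 + r)
          = ∑ r ∈ Finset.range h,
            (c (h + h - r) r * X ^ ((h + h - 2 * r).choose 2) * c (h + h + d - r) (d + 1 + r)
            + c (h + h - r) r * X ^ ((h + h - 2 * r).choose 2 + (h + h - 2 * r)) * c (h + h + 1 + d - r) (d + r)) :=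
        Finset.sum_congr rfl (fun r hr => hBG r (Finset.mem_range.mp hr))
      have hR : ∑ r ∈ Finset.range h,
            c (h + h + 1 - (r + 1)) (r + 1) * X ^ ((h + h + 1 - 2 * (r + 1)).choose 2) * c (h + h + 1 + d - (r + 1)) (d + (r + 1))
          = ∑ r ∈ Finset.range h,
            (c (h + h - (r + 1)) (r + 1) * X ^ ((h + h - 2 * (r + 1)).choose 2 + (h + h - 2 * (r + 1))) * c (h + h + 1 + d - (r + 1)) (d + (r + 1))
            + c (h + h - r) r * X ^ ((h + h - 2 * r).choose 2) * c (h + h + d - r) (d + 1 + r)) :=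
        Finset.sum_congr rfl (fun r hr => hAr r (Finset.mem_range.mp hr))
      rw [hL, hR, hBh, hA0, Finset.sum_add_distrib, Finset.sum_add_distrib]
      have hF1 : ∑ r ∈ Finset.range (h + 1),
            c (h + h - r) r * X ^ ((h + h - 2 * r).choose 2 + (h + h - 2 * r)) * c (h + h + 1 + d - r) (d + r)
          = (∑ r ∈ Finset.range h,
            c (h + h - r) r * X ^ ((h + h - 2 * r).choose 2 + (h + h - 2 * r)) * c (h + h + 1 + d - r) (d + r))
            + c (h + h - h) h * X ^ ((h + h - 2 * h).choose 2 + (h + h - 2 * h)) * c (h + h + 1 + d - h) (d + h) :=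
        Finset.sum_range_succ _ h
      have hF2 : ∑ r ∈ Finset.range (h + 1),
            c (h + h - r) r * X ^ ((h + h - 2 * r).choose 2 + (h + h - 2 * r)) * c (h + h + 1 + d - r) (d + r)
          = (∑ r ∈ Finset.range h,
            c (h + h - (r + 1)) (r + 1) * X ^ ((h + h - 2 * (r + 1)).choose 2 + (h + h - 2 * (r + 1))) * c (h + h + 1 + d - (r + 1)) (d + (r + 1)))
            + c (h + h - 0) 0 * X ^ ((h + h - 2 * 0).choose 2 + (h + h - 2 * 0)) * c (h + h + 1 + d - 0) (d + 0) :=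
        Finset.sum_range_succ' _ h
      linear_combination hF1.symm.trans hF2
    · -- l = 2 * h + 1
      rw [show (2 * h + 1) / 2 = h by omega, show (2 * h + 1 + 1) / 2 = h + 1 by omega]
      have hBG : ∀ r, r < h + 1 →
          c (2 * h + 1 - r) r * X ^ ((2 * h + 1 - 2 * r).choose 2) * c (2 * h + 1 + (d + 1) - r) (d + 1 + r)
          = c (2 * h + 1 - r) r * X ^ ((2 * h + 1 - 2 * r).choose 2) * c (2 * h + 1 + d - r) (d + 1 + r)
            + c (2 * h + 1 - r) r * X ^ ((2 * h + 1 - 2 * r).choose 2 + (2 * h + 1 - 2 * r)) * c (2 * h + 1 + 1 + d - r) (d + r) := by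
        intro r hr
        have p := pas (2 * h + 1 - 2 * r - 1) (d + r)
        rw [show 2 * h + 1 - 2 * r - 1 + (d + r) + 2 = 2 * h + 1 + (d + 1) - r by omega,
            show 2 * h + 1 - 2 * r - 1 + (d + r) + 1 = 2 * h + 1 + d - r by omega,
            show 2 * h + 1 - 2 * r - 1 + 1 = 2 * h + 1 - 2 * r by omega,
            show d + r + 1 = d + 1 + r by omega] at p
        rw [p, show 2 * h + 1 + (d + 1) - r = 2 * h + 1 + 1 + d - r by omega, pow_add]
        ring
      have hA0 :
          c (2 * h + 1 + 1 - 0) 0 * X ^ ((2 * h + 1 + 1 - 2 * 0).choose 2) * c (2 * h + 1 + 1 + d - 0) (d + 0)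
          = c (2 * h + 1 - 0) 0 * X ^ ((2 * h + 1 - 2 * 0).choose 2 + (2 * h + 1 - 2 * 0)) * c (2 * h + 1 + 1 + d - 0) (d + 0) := by
        simp only [Nat.sub_zero, Nat.mul_zero]
        rw [h0, h0, show 2 * h + 1 + 1 = (2 * h + 1) + 1 by omega, hc]
      have hAr : ∀ r, r < h →
          c (2 * h + 1 + 1 - (r + 1)) (r + 1) * X ^ ((2 * h + 1 + 1 - 2 * (r + 1)).choose 2) * c (2 * h + 1 + 1 + d - (r + 1)) (d + (r + 1))
          = c (2 * h + 1 - (r + 1)) (r + 1) * X ^ ((2 * h + 1 - 2 * (r + 1)).choose 2 + (2 * h + 1 - 2 * (r + 1))) * c (2 * h + 1 + 1 + d - (r + 1)) (d + (r + 1))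
            + c (2 * h + 1 - r) r * X ^ ((2 * h + 1 - 2 * r).choose 2) * c (2 * h + 1 + d - r) (d + 1 + r) := by
        intro r hr
        have p := pas (2 * h + 1 - 2 * r - 2) r
        rw [show 2 * h + 1 - 2 * r - 2 + r + 2 = 2 * h + 1 - r by omega,
            show 2 * h + 1 - 2 * r - 2 + r + 1 = 2 * h + 1 - (r + 1) by omega] at p
        set s := 2 * h + 1 - 2 * (r + 1) with hs
        rw [show 2 * h + 1 - 2 * r - 2 + 1 = s + 1 by omega] at p
        rw [show 2 * h + 1 + 1 - (r + 1) = 2 * h + 1 - r by omega,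
            show 2 * h + 1 + 1 - 2 * (r + 1) = s + 1 by omega,
            show 2 * h + 1 - 2 * r = s + 1 + 1 by omega,
            show 2 * h + 1 + 1 + d - (r + 1) = 2 * h + 1 + d - r by omega,
            show d + (r + 1) = d + 1 + r by omega,
            p, hc (s + 1), hc s, pow_add, pow_add, pow_add]
        ring
      have hAtop :
          c (2 * h + 1 + 1 - (h + 1)) (h + 1) * X ^ ((2 * h + 1 + 1 - 2 * (h + 1)).choose 2) * c (2 * h + 1 + 1 + d - (h + 1)) (d + (h + 1))
          = c (2 * h + 1 - h) h * X ^ ((2 * h + 1 - 2 * h).choose 2) * c (2 * h + 1 + d - h) (d + 1 + h) := by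
        have ht := htop h
        rw [show 2 * h + 1 + 1 - (h + 1) = h + 1 by omega, ht,
            show 2 * h + 1 + 1 - 2 * (h + 1) = 0 by omega,
            show 2 * h + 1 - h = h + 1 by omega,
            show 2 * h + 1 - 2 * h = 1 by omega,
            show 2 * h + 1 + 1 + d - (h + 1) = 2 * h + 1 + d - h by omega,
            show d + (h + 1) = d + 1 + h by omega]
        norm_num
      have hL : ∑ r ∈ Finset.range (h + 1),
            c (2 * h + 1 - r) r * X ^ ((2 * h + 1 - 2 * r).choose 2) * c (2 * h + 1 + (d + 1) - r) (d + 1 + r)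
          = ∑ r ∈ Finset.range (h + 1),
            (c (2 * h + 1 - r) r * X ^ ((2 * h + 1 - 2 * r).choose 2) * c (2 * h + 1 + d - r) (d + 1 + r)
            + c (2 * h + 1 - r) r * X ^ ((2 * h + 1 - 2 * r).choose 2 + (2 * h + 1 - 2 * r)) * c (2 * h + 1 + 1 + d - r) (d + r)) :=
        Finset.sum_congr rfl (fun r hr => hBG r (Finset.mem_range.mp hr))
      conv_rhs => rw [Finset.sum_range_succ']
      conv_rhs => rw [Finset.sum_range_succ]
      have hR : ∑ r ∈ Finset.range h,
            c (2 * h + 1 + 1 - (r + 1)) (r + 1) * X ^ ((2 * h + 1 + 1 - 2 * (r + 1)).choose 2) * c (2 * h + 1 + 1 + d - (r + 1)) (d + (r + 1))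
          = ∑ r ∈ Finset.range h,
            (c (2 * h + 1 - (r + 1)) (r + 1) * X ^ ((2 * h + 1 - 2 * (r + 1)).choose 2 + (2 * h + 1 - 2 * (r + 1))) * c (2 * h + 1 + 1 + d - (r + 1)) (d + (r + 1))
            + c (2 * h + 1 - r) r * X ^ ((2 * h + 1 - 2 * r).choose 2) * c (2 * h + 1 + d - r) (d + 1 + r)) :=
        Finset.sum_congr rfl (fun r hr => hAr r (Finset.mem_range.mp hr))
      rw [hL, hR, hAtop, hA0, Finset.sum_add_distrib, Finset.sum_add_distrib]
      have hF1 : ∑ r ∈ Finset.range (h + 1),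
            c (2 * h + 1 - r) r * X ^ ((2 * h + 1 - 2 * r).choose 2 + (2 * h + 1 - 2 * r)) * c (2 * h + 1 + 1 + d - r) (d + r)
          = (∑ r ∈ Finset.range h,
            c (2 * h + 1 - (r + 1)) (r + 1) * X ^ ((2 * h + 1 - 2 * (r + 1)).choose 2 + (2 * h + 1 - 2 * (r + 1))) * c (2 * h + 1 + 1 + d - (r + 1)) (d + (r + 1)))
            + c (2 * h + 1 - 0) 0 * X ^ ((2 * h + 1 - 2 * 0).choose 2 + (2 * h + 1 - 2 * 0)) * c (2 * h + 1 + 1 + d - 0) (d + 0) :=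
        Finset.sum_range_succ' _ h
      have hG1 : ∑ r ∈ Finset.range (h + 1),
            c (2 * h + 1 - r) r * X ^ ((2 * h + 1 - 2 * r).choose 2) * c (2 * h + 1 + d - r) (d + 1 + r)
          = (∑ r ∈ Finset.range h,
            c (2 * h + 1 - r) r * X ^ ((2 * h + 1 - 2 * r).choose 2) * c (2 * h + 1 + d - r) (d + 1 + r))
            + c (2 * h + 1 - h) h * X ^ ((2 * h + 1 - 2 * h).choose 2) * c (2 * h + 1 + d - h) (d + 1 + h) :=
        Finset.sum_range_succ _ h
      linear_combination hF1 + hG1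

theorem qCatalan_hankel_det (c : ℕ → ℕ → Polynomial ℤ)
    (h0 : ∀ n, c n 0 = 1)
    (hrec : ∀ n k, k ≤ n →
      c (n + 1) k = ∑ i ∈ Finset.range (k + 1), c i i * X ^ (k - i) * c (n - i) (k - i))
    (htop : ∀ n, c (n + 1) (n + 1) = c (n + 1) n)
    (n m : ℕ) (hm : m = 0 ∨ m = 1) :
    Matrix.det (Matrix.of fun i j : Fin (n + 1) =>
        c ((i : ℕ) + (j : ℕ) + m) ((i : ℕ) + (j : ℕ) + m)) =
      X ^ (n * (n + 1) * (4 * n + 6 * m - 1) / 6) := by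
  have cut := myCut c h0 hrec htop
  -- star identity
  have star : ∀ i e : ℕ, c (2 * i + m + e) (2 * i + m + e) =
      ∑ k ∈ Finset.range (i + 1),
        c (i + k + m) (i - k) * X ^ ((2 * k + m).choose 2) * c (i + k + m + e) (e + (i - k)) := by
    intro i e
    have hdiv : (2 * i + m) / 2 + 1 = i + 1 := by rcases hm with rfl | rfl <;> omega
    have h1 := cut (2 * i + m) e
    rw [hdiv] at h1
    rw [h1, ← Finset.sum_range_reflect]
    apply Finset.sum_congr rfl
    intro k hk
    have hk' : k ≤ i := by have := Finset.mem_range.mp hk; omega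
    rw [show i + 1 - 1 - k = i - k by omega,
        show 2 * i + m - (i - k) = i + k + m by omega,
        show 2 * i + m - 2 * (i - k) = 2 * k + m by omega,
        show 2 * i + m + e - (i - k) = i + k + m + e by omega]
  have entry : ∀ i j : ℕ, i ≤ j → c (i + j + m) (i + j + m) =
      ∑ k ∈ Finset.range (i + 1),
        c (i + k + m) (i - k) * (X ^ ((2 * k + m).choose 2) * c (j + k + m) (j - k)) := by
    intro i j hij
    have h1 := star i (j - i)
    rw [show 2 * i + m + (j - i) = i + j + m by omega] at h1
    rw [h1]
    apply Finset.sum_congr rfl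
    intro k hk
    have hk' : k ≤ i := by have := Finset.mem_range.mp hk; omega
    rw [show i + k + m + (j - i) = j + k + m by omega,
        show j - i + (i - k) = j - k by omega]
    ring
  -- matrices
  set L : Matrix (Fin (n + 1)) (Fin (n + 1)) (Polynomial ℤ) :=
    Matrix.of fun i k => if (k : ℕ) ≤ (i : ℕ) then c ((i : ℕ) + (k : ℕ) + m) ((i : ℕ) - (k : ℕ)) else 0 with hL
  set U : Matrix (Fin (n + 1)) (Fin (n + 1)) (Polynomial ℤ) :=
    Matrix.of fun k j => if (k : ℕ) ≤ (j : ℕ) then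
      X ^ ((2 * (k : ℕ) + m).choose 2) * c ((j : ℕ) + (k : ℕ) + m) ((j : ℕ) - (k : ℕ)) else 0 with hU
  have hfact : (Matrix.of fun i j : Fin (n + 1) =>
      c ((i : ℕ) + (j : ℕ) + m) ((i : ℕ) + (j : ℕ) + m)) = L * U := by
    refine Matrix.ext (fun i j => ?_)
    rw [Matrix.mul_apply]
    show c ((i : ℕ) + (j : ℕ) + m) ((i : ℕ) + (j : ℕ) + m) = _
    have hsum : (∑ k : Fin (n + 1), L i k * U k j) =
        ∑ k ∈ Finset.range (n + 1),
          ((if k ≤ (i : ℕ) then c ((i : ℕ) + k + m) ((i : ℕ) - k) else 0) *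
           (if k ≤ (j : ℕ) then X ^ ((2 * k + m).choose 2) * c ((j : ℕ) + k + m) ((j : ℕ) - k) else 0)) := by
      rw [← Fin.sum_univ_eq_sum_range]
      apply Finset.sum_congr rfl
      intro k _
      simp [hL, hU]
    rw [hsum]
    have hmin : min (i : ℕ) (j : ℕ) + 1 ≤ n + 1 := by
      have := i.isLt; have := j.isLt; omega
    rw [← Finset.sum_subset (Finset.range_subset_range.mpr hmin)
      (by
        intro k hk hnk
        have hk1 : ¬ (k ≤ (i : ℕ) ∧ k ≤ (j : ℕ)) := by
          have := Finset.mem_range.mp hk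
          have h2 : ¬ k < min (i : ℕ) (j : ℕ) + 1 := fun h => hnk (Finset.mem_range.mpr h)
          omega
        rcases Nat.le_total k (i : ℕ) with h | h
        · have : ¬ k ≤ (j : ℕ) := fun hj => hk1 ⟨h, hj⟩
          rw [if_neg this, mul_zero]
        · rcases Nat.lt_or_ge (i:ℕ) k with h' | h'
          · rw [if_neg (by omega), zero_mul]
          · have : ¬ k ≤ (j : ℕ) := fun hj => hk1 ⟨by omega, hj⟩
            rw [if_neg this, mul_zero])]
    have hcong : ∀ k ∈ Finset.range (min (i : ℕ) (j : ℕ) + 1),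
        ((if k ≤ (i : ℕ) then c ((i : ℕ) + k + m) ((i : ℕ) - k) else 0) *
         (if k ≤ (j : ℕ) then X ^ ((2 * k + m).choose 2) * c ((j : ℕ) + k + m) ((j : ℕ) - k) else 0)) =
        c ((i : ℕ) + k + m) ((i : ℕ) - k) * (X ^ ((2 * k + m).choose 2) * c ((j : ℕ) + k + m) ((j : ℕ) - k)) := by
      intro k hk
      have := Finset.mem_range.mp hk
      rw [if_pos (by omega), if_pos (by omega)]
    rw [Finset.sum_congr rfl hcong]
    rcases Nat.le_total (i : ℕ) (j : ℕ) with hij | hij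
    · rw [show min (i : ℕ) (j : ℕ) = (i : ℕ) by omega]
      exact entry (i : ℕ) (j : ℕ) hij
    · rw [show min (i : ℕ) (j : ℕ) = (j : ℕ) by omega]
      have h2 := entry j i hij
      rw [show (j : ℕ) + (i : ℕ) + m = (i : ℕ) + (j : ℕ) + m by omega] at h2
      rw [h2]
      apply Finset.sum_congr rfl
      intro k _
      ring
  rw [hfact, Matrix.det_mul]
  have hdetL : L.det = 1 := by
    rw [Matrix.det_of_lowerTriangular L (by
      intro a b hab
      have h1 : (a : ℕ) < (b : ℕ) := hab
      simp only [hL, Matrix.of_apply]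
      rw [if_neg (by omega)])]
    apply Finset.prod_eq_one
    intro a _
    simp only [hL, Matrix.of_apply, le_refl, if_pos, Nat.sub_self]
    exact h0 _
  have hdetU : U.det = X ^ (∑ k ∈ Finset.range (n + 1), (2 * k + m).choose 2) := by
    rw [Matrix.det_of_upperTriangular (by
      intro a b hab
      have h1 : (b : ℕ) < (a : ℕ) := hab
      simp only [hU, Matrix.of_apply]
      rw [if_neg (by omega)])]
    have hdiag : ∀ a : Fin (n + 1), U a a = X ^ ((2 * (a : ℕ) + m).choose 2) := by
      intro a
      simp only [hU, Matrix.of_apply, le_refl, if_pos, Nat.sub_self]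
      rw [h0, mul_one]
    rw [Finset.prod_congr rfl (fun a _ => hdiag a), Finset.prod_pow_eq_pow_sum]
    congr 1
    exact Fin.sum_univ_eq_sum_range (fun k => (2 * k + m).choose 2) (n + 1)
  have hch : ∀ s : ℕ, 2 * s.choose 2 + s = s * s := by
    intro s
    induction s with
    | zero => simp
    | succ s ih =>
      rw [Nat.choose_succ_succ, Nat.choose_one_right]
      zify at ih ⊢
      linear_combination ih
  have hmm2 : m * m = m := by rcases hm with rfl | rfl <;> simp
  have key : ∀ N : ℕ, 6 * (∑ k ∈ Finset.range (N + 1), (2 * k + m).choose 2) + N * (N + 1)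
      = 4 * N * N * (N + 1) + 6 * m * N * (N + 1) := by
    intro N
    induction N with
    | zero => rcases hm with rfl | rfl <;> simp
    | succ t ih =>
      rw [Finset.sum_range_succ]
      have h1 := hch (2 * (t + 1) + m)
      zify at ih h1 hmm2 ⊢
      linear_combination ih + 3 * h1 + 3 * hmm2
  have hexp : ∑ k ∈ Finset.range (n + 1), (2 * k + m).choose 2 = n * (n + 1) * (4 * n + 6 * m - 1) / 6 := by
    have h6 : n * (n + 1) * (4 * n + 6 * m - 1) = 6 * ∑ k ∈ Finset.range (n + 1), (2 * k + m).choose 2 := by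
      cases n with
      | zero =>
        rcases hm with rfl | rfl <;> simp
      | succ t =>
        have k1 := key (t + 1)
        rw [show 4 * (t + 1) + 6 * m - 1 = 4 * t + 6 * m + 3 by omega]
        zify at k1 ⊢
        linear_combination -k1
    rw [h6, Nat.mul_div_cancel_left _ (by norm_num : (0:ℕ) < 6)]
  rw [hdetL, hdetU, one_mul, hexp]
end

section
/- In the free ℤ-algebra ℤ⟨y_1, y_2, ...⟩, define B'(n,k) = Σ_J y_{j_1+k−1}·y_{j_2+k−3}···y_{j_k+1−k}, summing over all subsets J = {j_1 < ... < j_k} of {1,...,n} (B'(n,0)=1, B'(n,k)=0 for k>n). Let T be the algebra endomorphism with T(y_i) = y_{i+1}. Then B'(m+n, k) = Σ_{a+b=k, a,b ≥ 0} T^b(B'(m,a)) · T^{m−a}(B'(n,b)) for all m, n, k ≥ 0. -/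
/-- Noncommutative binomial coefficient of the second kind:
`B'(n,k) = Σ_{J={j₁<⋯<j_k}⊆[1,n]} y_{j₁+k-1} y_{j₂+k-3} ⋯ y_{j_k+1-k}`. -/
noncomputable def ncBinom' (n k : ℕ) : FreeAlgebra ℤ ℕ :=
  ∑ J ∈ Finset.powersetCard k (Finset.Icc 1 n),
    ((J.sort (· ≤ ·)).zipIdx.map (fun p => FreeAlgebra.ι ℤ (p.1 + k - (2 * p.2 + 1)))).prod

/-- The shift endomorphism `T(y_i) = y_{i+1}`. -/
noncomputable def T : FreeAlgebra ℤ ℕ →ₐ[ℤ] FreeAlgebra ℤ ℕ :=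
  FreeAlgebra.lift ℤ (fun i => FreeAlgebra.ι ℤ (i + 1))

/-! ### Auxiliary definitions -/

/-- The product `y_{j₁+k-(2s+1)} y_{j₂+k-(2s+3)} ⋯` over a list, starting at position `s`. -/
noncomputable def trm (k : ℕ) : ℕ → List ℕ → FreeAlgebra ℤ ℕ
  | _, [] => 1
  | s, j :: t => FreeAlgebra.ι ℤ (j + k - (2 * s + 1)) * trm k (s + 1) t

/-- Shift by `r` endomorphism. -/
noncomputable def Sh (r : ℕ) : FreeAlgebra ℤ ℕ →ₐ[ℤ] FreeAlgebra ℤ ℕ :=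
  FreeAlgebra.lift ℤ (fun i => FreeAlgebra.ι ℤ (i + r))

lemma Sh_ι (r i : ℕ) : Sh r (FreeAlgebra.ι ℤ i) = FreeAlgebra.ι ℤ (i + r) := by
  simp [Sh]

lemma T_iterate (r : ℕ) : (⇑T)^[r] = ⇑(Sh r) := by
  induction r with
  | zero =>
    have : Sh 0 = AlgHom.id ℤ (FreeAlgebra ℤ ℕ) := by
      apply FreeAlgebra.hom_ext; funext i; simp [Sh]
    simp [this]
  | succ r ih =>
    have : Sh (r + 1) = T.comp (Sh r) := by
      apply FreeAlgebra.hom_ext; funext i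
      simp [Sh, T, add_assoc]
    rw [Function.iterate_succ', ih, this]
    rfl

lemma enumFrom_prod (k : ℕ) : ∀ (l : List ℕ) (s : ℕ),
    ((List.zipIdx l s).map (fun p => FreeAlgebra.ι ℤ (p.1 + k - (2 * p.2 + 1)))).prod
      = trm k s l
  | [], s => rfl
  | j :: t, s => by
    rw [List.zipIdx_cons, List.map_cons, List.prod_cons, enumFrom_prod k t (s + 1)]
    rfl

lemma ncBinom'_eq (n k : ℕ) :
    ncBinom' n k = ∑ J ∈ Finset.powersetCard k (Finset.Icc 1 n),
      trm k 0 (J.sort (· ≤ ·)) := by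
  unfold ncBinom'
  refine Finset.sum_congr rfl fun J _ => ?_
  rw [show (J.sort (· ≤ ·)).zipIdx = List.zipIdx (J.sort (· ≤ ·)) 0 from rfl,
    enumFrom_prod]

lemma trm_append (k : ℕ) : ∀ (l₁ l₂ : List ℕ) (s : ℕ),
    trm k s (l₁ ++ l₂) = trm k s l₁ * trm k (s + l₁.length) l₂
  | [], l₂, s => by simp [trm]
  | j :: t, l₂, s => by
    rw [List.cons_append, trm, trm, trm_append k t l₂ (s + 1), mul_assoc,
      List.length_cons, show s + 1 + t.length = s + (t.length + 1) by omega]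

lemma trm_map (k c : ℕ) : ∀ (l : List ℕ) (s : ℕ),
    trm k s (l.map (· + c)) = trm (k + c) s l
  | [], s => rfl
  | j :: t, s => by
    rw [List.map_cons, trm, trm, trm_map k c t (s + 1),
      show j + c + k = j + (k + c) by omega]

lemma trm_shift (k d : ℕ) : ∀ (l : List ℕ) (s : ℕ),
    trm (k + 2 * d) (s + d) l = trm k s l
  | [], s => rfl
  | j :: t, s => by
    rw [trm, trm, show s + d + 1 = s + 1 + d by omega, trm_shift k d t (s + 1),
      show j + (k + 2 * d) - (2 * (s + d) + 1) = j + k - (2 * s + 1) by omega]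

lemma Sh_trm (r k : ℕ) : ∀ (l : List ℕ) (s : ℕ),
    (∀ p ∈ List.zipIdx l s, 2 * p.2 + 1 ≤ p.1 + k) →
    Sh r (trm k s l) = trm (k + r) s l
  | [], s, _ => by simp [trm]
  | j :: t, s, h => by
    have h1 : 2 * s + 1 ≤ j + k :=
      h (j, s) (by rw [List.zipIdx_cons]; exact List.mem_cons_self)
    rw [trm, map_mul, Sh_ι, Sh_trm r k t (s + 1)
      (fun p hp => h p (by rw [List.zipIdx_cons]; exact List.mem_cons_of_mem _ hp)), trm,
      show j + k - (2 * s + 1) + r = j + (k + r) - (2 * s + 1) by omega]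

lemma enum_lb : ∀ (l : List ℕ) (c s : ℕ), l.Pairwise (· < ·) → (∀ x ∈ l, c ≤ x) →
    ∀ p ∈ List.zipIdx l s, p.2 + c ≤ p.1 + s
  | [], _, _, _, _ => by simp
  | j :: t, c, s, hs, hm => by
    intro p hp
    rw [List.zipIdx_cons, List.mem_cons] at hp
    rcases hp with rfl | hp
    · have := hm j List.mem_cons_self; simp; omega
    · have hj := hm j List.mem_cons_self
      have ht : ∀ x ∈ t, c + 1 ≤ x := fun x hx => by
        have := (List.pairwise_cons.mp hs).1 x hx; omega
      have := enum_lb t (c + 1) (s + 1) (List.pairwise_cons.mp hs).2 ht p hp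
      omega

lemma hyp_of_mem (N a : ℕ) (J : Finset ℕ) (hJ : J ∈ Finset.powersetCard a (Finset.Icc 1 N)) :
    ∀ p ∈ List.zipIdx (J.sort (· ≤ ·)) 0, 2 * p.2 + 1 ≤ p.1 + a := by
  intro p hp
  obtain ⟨hsub, hcard⟩ := Finset.mem_powersetCard.mp hJ
  have h1 : ∀ x ∈ J.sort (· ≤ ·), 1 ≤ x := fun x hx =>
    (Finset.mem_Icc.mp (hsub ((Finset.mem_sort _).mp hx))).1
  have h2 := enum_lb _ 1 0 (List.sortedLT_iff_pairwise.mp (Finset.sortedLT_sort J)) h1 p hp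
  obtain ⟨x, i⟩ := p
  have h3 := List.mem_zipIdx hp
  have h4 : (J.sort (· ≤ ·)).length = a := by rw [Finset.length_sort, hcard]
  simp only [h4] at h3
  simp at h2 ⊢
  omega

/-- Addition embedding. -/
def embAdd (m : ℕ) : ℕ ↪ ℕ := ⟨fun j => j + m, add_left_injective m⟩

lemma sort_union (m : ℕ) (J₁ J₂ : Finset ℕ) (h1 : ∀ x ∈ J₁, x ≤ m) (h2 : ∀ x ∈ J₂, 1 ≤ x) :
    (J₁ ∪ J₂.map (embAdd m)).sort (· ≤ ·) =
      J₁.sort (· ≤ ·) ++ (J₂.sort (· ≤ ·)).map (· + m) := by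
  have hdisj : Disjoint J₁ (J₂.map (embAdd m)) := by
    rw [Finset.disjoint_left]
    intro x hx hx'
    obtain ⟨y, hy, rfl⟩ := Finset.mem_map.mp hx'
    have hxm : y + m ∈ J₁ := by simpa [embAdd] using hx
    have := h1 _ hxm; have := h2 _ hy
    omega
  refine List.Perm.eq_of_pairwise' (r := (· ≤ ·)) ?_ ?_ ?_
  rotate_right
  · rw [← Multiset.coe_eq_coe, Finset.sort_eq, ← Finset.disjUnion_eq_union _ _ hdisj]
    show J₁.val + (J₂.map (embAdd m)).val = _
    rw [Finset.map_val]
    have h3 : Multiset.map (⇑(embAdd m)) J₂.val = Multiset.map (· + m) J₂.val := rfl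
    have h4 : ((J₁.sort (· ≤ ·) ++ (J₂.sort (· ≤ ·)).map (· + m) : List ℕ) : Multiset ℕ)
        = ((J₁.sort (· ≤ ·) : List ℕ) : Multiset ℕ)
          + Multiset.map (· + m) ((J₂.sort (· ≤ ·) : List ℕ) : Multiset ℕ) := rfl
    rw [h3, h4, Finset.sort_eq, Finset.sort_eq]
  · exact Finset.pairwise_sort _ _
  · rw [List.pairwise_append]
    refine ⟨Finset.pairwise_sort _ _,
      (Finset.pairwise_sort J₂ _).map _ (fun {a b} h => by omega), ?_⟩
    intro x hx y hy
    obtain ⟨z, hz, rfl⟩ := List.mem_map.mp hy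
    have := h1 x ((Finset.mem_sort _).mp hx)
    omega

theorem ncBinom'_mult (m n k : ℕ) :
    ncBinom' (m + n) k =
      ∑ a ∈ Finset.range (k + 1),
        (⇑T)^[k - a] (ncBinom' m a) * (⇑T)^[m - a] (ncBinom' n (k - a)) := by
  have key : ∀ a ∈ Finset.range (k + 1),
      (⇑T)^[k - a] (ncBinom' m a) * (⇑T)^[m - a] (ncBinom' n (k - a)) =
      ∑ J₁ ∈ Finset.powersetCard a (Finset.Icc 1 m),
        ∑ J₂ ∈ Finset.powersetCard (k - a) (Finset.Icc 1 n),
          Sh (k - a) (trm a 0 (J₁.sort (· ≤ ·))) *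
            Sh (m - a) (trm (k - a) 0 (J₂.sort (· ≤ ·))) := by
    intro a _
    rw [T_iterate, T_iterate, ncBinom'_eq, ncBinom'_eq, map_sum, map_sum, Finset.sum_mul_sum]
  rw [Finset.sum_congr rfl key, ncBinom'_eq]
  have hsig : ∑ x ∈ (Finset.range (k + 1)).sigma
      (fun a => Finset.powersetCard a (Finset.Icc 1 m) ×ˢ
        Finset.powersetCard (k - a) (Finset.Icc 1 n)),
      (Sh (k - x.1) (trm x.1 0 (x.2.1.sort (· ≤ ·))) *
        Sh (m - x.1) (trm (k - x.1) 0 (x.2.2.sort (· ≤ ·))))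
      = ∑ a ∈ Finset.range (k + 1),
        ∑ J₁ ∈ Finset.powersetCard a (Finset.Icc 1 m),
          ∑ J₂ ∈ Finset.powersetCard (k - a) (Finset.Icc 1 n),
            Sh (k - a) (trm a 0 (J₁.sort (· ≤ ·))) *
              Sh (m - a) (trm (k - a) 0 (J₂.sort (· ≤ ·))) := by
    rw [Finset.sum_sigma]
    exact Finset.sum_congr rfl fun a _ => Finset.sum_product _ _ _
  refine Eq.trans ?_ hsig
  refine (Finset.sum_nbij'
    (fun x => x.2.1 ∪ x.2.2.map (embAdd m))
    (fun J => ⟨(J ∩ Finset.Icc 1 m).card,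
      (J ∩ Finset.Icc 1 m, (J \ Finset.Icc 1 m).image (· - m))⟩)
    ?_ ?_ ?_ ?_ ?_).symm
  · -- forward membership
    rintro ⟨a, J₁, J₂⟩ hx
    simp only [Finset.mem_sigma, Finset.mem_product] at hx
    obtain ⟨ha, h₁, h₂⟩ := hx
    obtain ⟨hs₁, hc₁⟩ := Finset.mem_powersetCard.mp h₁
    obtain ⟨hs₂, hc₂⟩ := Finset.mem_powersetCard.mp h₂
    rw [Finset.mem_range] at ha
    dsimp only
    have hdisj : Disjoint J₁ (J₂.map (embAdd m)) := by
      rw [Finset.disjoint_left]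
      intro x hx hx'
      obtain ⟨y, hy, rfl⟩ := Finset.mem_map.mp hx'
      have hxm : y + m ∈ J₁ := by simpa [embAdd] using hx
      have := Finset.mem_Icc.mp (hs₁ hxm)
      have := Finset.mem_Icc.mp (hs₂ hy)
      omega
    rw [Finset.mem_powersetCard]
    constructor
    · intro x hx
      rcases Finset.mem_union.mp hx with h | h
      · have := Finset.mem_Icc.mp (hs₁ h); rw [Finset.mem_Icc]; omega
      · obtain ⟨y, hy, rfl⟩ := Finset.mem_map.mp h
        have := Finset.mem_Icc.mp (hs₂ hy)
        simp only [embAdd, Function.Embedding.coeFn_mk, Finset.mem_Icc]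
        omega
    · rw [Finset.card_union_of_disjoint hdisj, Finset.card_map, hc₁, hc₂]
      omega
  · -- backward membership
    intro J hJ
    obtain ⟨hsub, hcard⟩ := Finset.mem_powersetCard.mp hJ
    rw [Finset.mem_sigma]
    dsimp only
    have hcle : (J ∩ Finset.Icc 1 m).card ≤ k := by
      rw [← hcard]; exact Finset.card_le_card Finset.inter_subset_left
    refine ⟨Finset.mem_range.mpr (by omega), Finset.mem_product.mpr ⟨?_, ?_⟩⟩
    · exact Finset.mem_powersetCard.mpr ⟨Finset.inter_subset_right, rfl⟩
    · rw [Finset.mem_powersetCard]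
      constructor
      · intro x hx
        obtain ⟨y, hy, rfl⟩ := Finset.mem_image.mp hx
        obtain ⟨hyJ, hyn⟩ := Finset.mem_sdiff.mp hy
        have := Finset.mem_Icc.mp (hsub hyJ)
        rw [Finset.mem_Icc] at hyn ⊢
        omega
      · have hinj : Set.InjOn (· - m) ↑(J \ Finset.Icc 1 m) := by
          intro x hx y hy hxy
          simp only [Finset.coe_sdiff, Set.mem_diff, Finset.mem_coe, Finset.coe_Icc,
            Set.mem_Icc] at hx hy
          have hx1 := Finset.mem_Icc.mp (hsub hx.1)
          have hy1 := Finset.mem_Icc.mp (hsub hy.1)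
          simp only at hxy
          omega
        rw [Finset.card_image_of_injOn hinj]
        have := Finset.card_inter_add_card_sdiff J (Finset.Icc 1 m)
        omega
  · -- left inverse
    rintro ⟨a, J₁, J₂⟩ hx
    simp only [Finset.mem_sigma, Finset.mem_product] at hx
    obtain ⟨ha, h₁, h₂⟩ := hx
    obtain ⟨hs₁, hc₁⟩ := Finset.mem_powersetCard.mp h₁
    obtain ⟨hs₂, hc₂⟩ := Finset.mem_powersetCard.mp h₂
    have e₁ : (J₁ ∪ J₂.map (embAdd m)) ∩ Finset.Icc 1 m = J₁ := by
      ext x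
      simp only [Finset.mem_inter, Finset.mem_union, Finset.mem_map, embAdd,
        Function.Embedding.coeFn_mk, Finset.mem_Icc]
      constructor
      · rintro ⟨h | ⟨y, hy, rfl⟩, hb⟩
        · exact h
        · have := Finset.mem_Icc.mp (hs₂ hy); omega
      · intro hx
        have := Finset.mem_Icc.mp (hs₁ hx)
        exact ⟨Or.inl hx, by omega⟩
    have e₂ : ((J₁ ∪ J₂.map (embAdd m)) \ Finset.Icc 1 m).image (· - m) = J₂ := by
      ext x
      simp only [Finset.mem_image, Finset.mem_sdiff, Finset.mem_union, Finset.mem_map,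
        embAdd, Function.Embedding.coeFn_mk, Finset.mem_Icc]
      constructor
      · rintro ⟨y, ⟨hy | ⟨z, hz, rfl⟩, hb⟩, rfl⟩
        · have := Finset.mem_Icc.mp (hs₁ hy); omega
        · have hz' := Finset.mem_Icc.mp (hs₂ hz)
          have hzz : z + m - m = z := by omega
          rw [hzz]; exact hz
      · intro hx
        have := Finset.mem_Icc.mp (hs₂ hx)
        exact ⟨x + m, ⟨Or.inr ⟨x, hx, rfl⟩, by omega⟩, by omega⟩
    simp only
    rw [e₁, e₂, hc₁]
  · -- right inverse
    intro J hJ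
    obtain ⟨hsub, hcard⟩ := Finset.mem_powersetCard.mp hJ
    simp only
    ext x
    simp only [Finset.mem_union, Finset.mem_inter, Finset.mem_map, Finset.mem_image,
      Finset.mem_sdiff, embAdd, Function.Embedding.coeFn_mk, Finset.mem_Icc]
    constructor
    · rintro (⟨hx, _⟩ | ⟨y, ⟨z, ⟨hz, hzn⟩, rfl⟩, rfl⟩)
      · exact hx
      · have := Finset.mem_Icc.mp (hsub hz)
        have hzz : z - m + m = z := by omega
        rw [hzz]; exact hz
    · intro hx
      have hb := Finset.mem_Icc.mp (hsub hx)
      by_cases hle : x ≤ m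
      · exact Or.inl ⟨hx, by omega⟩
      · exact Or.inr ⟨x - m, ⟨x, ⟨hx, by omega⟩, rfl⟩, by omega⟩
  · -- term equality
    rintro ⟨a, J₁, J₂⟩ hx
    simp only [Finset.mem_sigma, Finset.mem_product] at hx
    obtain ⟨ha, h₁, h₂⟩ := hx
    obtain ⟨hs₁, hc₁⟩ := Finset.mem_powersetCard.mp h₁
    obtain ⟨hs₂, hc₂⟩ := Finset.mem_powersetCard.mp h₂
    rw [Finset.mem_range] at ha
    have ham : a ≤ m := by
      have := Finset.card_le_card hs₁
      rwa [hc₁, Nat.card_Icc, Nat.add_sub_cancel] at this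
    dsimp only
    rw [Sh_trm (k - a) a _ 0 (hyp_of_mem m a J₁ h₁),
      Sh_trm (m - a) (k - a) _ 0 (hyp_of_mem n (k - a) J₂ h₂),
      sort_union m J₁ J₂ (fun x hx => (Finset.mem_Icc.mp (hs₁ hx)).2)
        (fun x hx => (Finset.mem_Icc.mp (hs₂ hx)).1),
      trm_append, Finset.length_sort, hc₁, trm_map,
      show a + (k - a) = k by omega]
    congr 1
    have hts := trm_shift ((k - a) + (m - a)) a (J₂.sort (· ≤ ·)) 0
    rw [show (k - a) + (m - a) + 2 * a = k + m by omega] at hts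
    rw [← hts]
end

section
/- In the free ℤ-algebra ℤ⟨y_1, y_2, ...⟩ with shift endomorphism T(y_i) = y_{i+1}, the noncommutative truncated Catalan numbers C̃(n,k) = Σ_{j_1≤...≤j_k≤n, j_s≥s} y_{j_1}y_{j_2−1}···y_{j_k−k+1} satisfy C̃(n+1,k) = Σ_{i=0}^{k} C̃(i,i)·T(C̃(n−i,k−i)) for all 0 ≤ k ≤ n. -/
/-- Noncommutative truncated Catalan number
`C̃(n,k) = Σ_{j₁≤⋯≤j_k≤n, j_s≥s} y_{j₁} y_{j₂-1} ⋯ y_{j_k-k+1}`. -/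
noncomputable def Ctil (n k : ℕ) : FreeAlgebra ℤ ℕ :=
  ∑ j ∈ Finset.univ.filter (fun j : Fin k → Fin (n + 1) =>
      (∀ s t : Fin k, s ≤ t → j s ≤ j t) ∧ ∀ s : Fin k, (s : ℕ) + 1 ≤ ((j s) : ℕ)),
    (List.ofFn (fun s : Fin k => FreeAlgebra.ι ℤ (((j s) : ℕ) - (s : ℕ)))).prod

namespace CtilAux

open Finset

/-- the index set of the sum defining `Ctil n k` -/
def idxSet (n k : ℕ) : Finset (Fin k → Fin (n + 1)) :=
  Finset.univ.filter (fun j =>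
      (∀ s t : Fin k, s ≤ t → j s ≤ j t) ∧ ∀ s : Fin k, (s : ℕ) + 1 ≤ ((j s) : ℕ))

def word {n k : ℕ} (j : Fin k → Fin (n + 1)) : FreeAlgebra ℤ ℕ :=
  (List.ofFn (fun s : Fin k => FreeAlgebra.ι ℤ (((j s) : ℕ) - (s : ℕ)))).prod

lemma Ctil_eq (n k : ℕ) : Ctil n k = ∑ j ∈ idxSet n k, word j := rfl

lemma T_ι (m : ℕ) : T (FreeAlgebra.ι ℤ m) = FreeAlgebra.ι ℤ (m + 1) :=
  FreeAlgebra.lift_ι_apply _ _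

/-- the splitting predicate: entries before position `i` are at most `i`,
entries from position `i` on are at least `s+2`. -/
def P (i : ℕ) {n k : ℕ} (j : Fin k → Fin (n + 1)) : Prop :=
  (∀ s : Fin k, (s : ℕ) < i → ((j s) : ℕ) ≤ i) ∧
  (∀ s : Fin k, i ≤ (s : ℕ) → (s : ℕ) + 2 ≤ ((j s) : ℕ))

instance (i n k : ℕ) (j : Fin k → Fin (n + 1)) : Decidable (P i j) := by
  unfold P; infer_instance

lemma mem_idxSet {n k : ℕ} (j : Fin k → Fin (n + 1)) :
    j ∈ idxSet n k ↔
      (∀ s t : Fin k, s ≤ t → j s ≤ j t) ∧ ∀ s : Fin k, (s : ℕ) + 1 ≤ ((j s) : ℕ) := by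
  simp [idxSet]

/-- each valid `j` satisfies `P i j` for exactly one `i ∈ [0,k]`. -/
lemma exists_unique_P {n k : ℕ} (j : Fin k → Fin (n + 2)) (hj : j ∈ idxSet (n + 1) k) :
    ∃! i, i ∈ Finset.range (k + 1) ∧ P i j := by
  obtain ⟨hmono, hge⟩ := (mem_idxSet j).mp hj
  -- least i such that the second clause holds
  have hk : ∀ s : Fin k, k ≤ (s : ℕ) → (s : ℕ) + 2 ≤ ((j s) : ℕ) := by
    intro s hs; exact absurd hs (by have := s.isLt; omega)
  have hex : ∃ i, ∀ s : Fin k, i ≤ (s : ℕ) → (s : ℕ) + 2 ≤ ((j s) : ℕ) := ⟨k, hk⟩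
  set i₀ := Nat.find hex with hi₀def
  have hspec : ∀ s : Fin k, i₀ ≤ (s : ℕ) → (s : ℕ) + 2 ≤ ((j s) : ℕ) := Nat.find_spec hex
  have hle : i₀ ≤ k := Nat.find_le hk
  -- uniqueness helper: no two distinct i's can both satisfy P
  have huniq : ∀ a b, a ∈ Finset.range (k + 1) → b ∈ Finset.range (k + 1) →
      P a j → P b j → a = b := by
    intro a b ha hb hPa hPb
    by_contra hne
    wlog hab : a < b generalizing a b
    · exact this b a hb ha hPb hPa (Ne.symm hne) (by omega)
    have hb' : b ≤ k := by simpa [Nat.lt_succ_iff] using hb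
    have hbpos : 1 ≤ b := by omega
    set s : Fin k := ⟨b - 1, by omega⟩ with hs
    have h1 : ((j s) : ℕ) ≤ b := hPb.1 s (by simp [hs]; omega)
    have h2 : (b - 1) + 2 ≤ ((j s) : ℕ) := hPa.2 s (by simp [hs]; omega)
    omega
  have hfirst : ∀ s : Fin k, (s : ℕ) < i₀ → ((j s) : ℕ) ≤ i₀ := by
    intro s hs
    -- i₀ ≥ 1 here; i₀ - 1 does not satisfy the clause
    have hpos : 1 ≤ i₀ := by omega
    have hnot : ¬ (∀ t : Fin k, i₀ - 1 ≤ (t : ℕ) → (t : ℕ) + 2 ≤ ((j t) : ℕ)) :=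
      Nat.find_min hex (by omega)
    push_neg at hnot
    obtain ⟨t, ht1, ht2⟩ := hnot
    have htge := hge t
    -- so j t = t + 1, and t must equal i₀ - 1
    have ht0 : (t : ℕ) = i₀ - 1 := by
      by_contra h
      have : i₀ ≤ (t : ℕ) := by omega
      have := hspec t this
      omega
    have hjt : ((j t) : ℕ) = i₀ := by omega
    have hst : s ≤ t := by
      rw [Fin.le_def]; omega
    have := hmono s t hst
    rw [Fin.le_def] at this
    omega
  refine ⟨i₀, ⟨Finset.mem_range.mpr (by omega), hfirst, hspec⟩, ?_⟩
  rintro b ⟨hbr, hPb⟩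
  exact huniq b i₀ hbr (Finset.mem_range.mpr (by omega)) hPb ⟨hfirst, hspec⟩

/-- forward map of the bijection -/
def fwd (n k i : ℕ) (hik : i ≤ k) (hkn : k ≤ n) (j : Fin k → Fin (n + 2)) :
    (Fin i → Fin (i + 1)) × (Fin (k - i) → Fin (n - i + 1)) :=
  (fun s => ⟨min ((j (Fin.castLE hik s)) : ℕ) i, by omega⟩,
   fun t => ⟨min (((j ⟨i + (t : ℕ), by have := t.isLt; omega⟩ : Fin (n + 2)) : ℕ) - (i + 1))
      (n - i), by omega⟩)

/-- backward map of the bijection -/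
def bwd (n k i : ℕ) (hik : i ≤ k) (hkn : k ≤ n)
    (pq : (Fin i → Fin (i + 1)) × (Fin (k - i) → Fin (n - i + 1))) : Fin k → Fin (n + 2) :=
  fun s => if h : (s : ℕ) < i then
    ⟨(pq.1 ⟨(s : ℕ), h⟩ : ℕ), by have := (pq.1 ⟨(s : ℕ), h⟩).isLt; omega⟩
  else
    ⟨(pq.2 ⟨(s : ℕ) - i, by have := s.isLt; omega⟩ : ℕ) + (i + 1),
      by have := (pq.2 ⟨(s : ℕ) - i, by have := s.isLt; omega⟩).isLt; omega⟩

/-- the summand over one fiber equals one term of the RHS -/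
lemma piece (n k i : ℕ) (hik : i ≤ k) (hkn : k ≤ n) :
    ∑ j ∈ (idxSet (n + 1) k).filter (P i), word j
      = Ctil i i * T (Ctil (n - i) (k - i)) := by
  rw [Ctil_eq, Ctil_eq, map_sum, Finset.sum_mul_sum, ← Finset.sum_product']
  refine Finset.sum_nbij' (fwd n k i hik hkn) (bwd n k i hik hkn) ?_ ?_ ?_ ?_ ?_
  · -- fwd maps into the product set
    intro j hj
    rw [Finset.mem_filter] at hj
    obtain ⟨hj1, hpre, hsuf⟩ := hj
    obtain ⟨hmono, hge⟩ := (mem_idxSet j).mp hj1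
    rw [Finset.mem_product, mem_idxSet, mem_idxSet]
    refine ⟨⟨?_, ?_⟩, ?_, ?_⟩
    · intro s t hst
      rw [Fin.le_def] at hst ⊢
      simp only [fwd]
      have : ((j (Fin.castLE hik s)) : ℕ) ≤ ((j (Fin.castLE hik t)) : ℕ) := by
        have := hmono (Fin.castLE hik s) (Fin.castLE hik t) (by rw [Fin.le_def]; simpa using hst)
        rwa [Fin.le_def] at this
      omega
    · intro s
      simp only [fwd]
      have h1 : (s : ℕ) + 1 ≤ ((j (Fin.castLE hik s)) : ℕ) := by
        simpa using hge (Fin.castLE hik s)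
      have h2 := s.isLt
      omega
    · intro s t hst
      rw [Fin.le_def] at hst ⊢
      simp only [fwd]
      have hs := s.isLt
      have ht := t.isLt
      have : ((j ⟨i + (s : ℕ), by omega⟩) : ℕ) ≤ ((j ⟨i + (t : ℕ), by omega⟩) : ℕ) := by
        have := hmono ⟨i + (s : ℕ), by omega⟩ ⟨i + (t : ℕ), by omega⟩
          (by rw [Fin.le_def]; simpa using hst)
        rwa [Fin.le_def] at this
      omega
    · intro t
      simp only [fwd]
      have ht := t.isLt
      have h1 : (i + (t : ℕ)) + 2 ≤ ((j ⟨i + (t : ℕ), by omega⟩) : ℕ) := by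
        simpa using hsuf ⟨i + (t : ℕ), by omega⟩ (by simp)
      have h2 := (j ⟨i + (t : ℕ), by omega⟩).isLt
      omega
  · -- bwd maps into the fiber
    rintro ⟨p, q⟩ hpq
    rw [Finset.mem_product, mem_idxSet, mem_idxSet] at hpq
    obtain ⟨⟨hpm, hpg⟩, hqm, hqg⟩ := hpq
    rw [Finset.mem_filter, mem_idxSet]
    have hbval : ∀ s : Fin k,
        ((bwd n k i hik hkn (p, q) s) : ℕ) =
          if h : (s : ℕ) < i then ((p ⟨(s : ℕ), h⟩) : ℕ)
          else ((q ⟨(s : ℕ) - i, by have := s.isLt; omega⟩) : ℕ) + (i + 1) := by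
      intro s
      simp only [bwd]
      split <;> rfl
    refine ⟨⟨?_, ?_⟩, ?_, ?_⟩
    · intro s t hst
      rw [Fin.le_def] at hst
      rw [Fin.le_def, hbval s, hbval t]
      by_cases hs : (s : ℕ) < i <;> by_cases ht : (t : ℕ) < i
      · rw [dif_pos hs, dif_pos ht]
        have := hpm ⟨(s : ℕ), hs⟩ ⟨(t : ℕ), ht⟩ (by rw [Fin.le_def]; simpa using hst)
        rwa [Fin.le_def] at this
      · rw [dif_pos hs, dif_neg ht]
        have := (p ⟨(s : ℕ), hs⟩).isLt
        omega
      · omega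
      · rw [dif_neg hs, dif_neg ht]
        have : ((q ⟨(s : ℕ) - i, by have := s.isLt; omega⟩) : ℕ) ≤
            ((q ⟨(t : ℕ) - i, by have := t.isLt; omega⟩) : ℕ) := by
          have := hqm ⟨(s : ℕ) - i, by have := s.isLt; omega⟩
            ⟨(t : ℕ) - i, by have := t.isLt; omega⟩ (by rw [Fin.le_def]; simp; omega)
          rwa [Fin.le_def] at this
        omega
    · intro s
      rw [hbval s]
      by_cases hs : (s : ℕ) < i
      · rw [dif_pos hs]
        simpa using hpg ⟨(s : ℕ), hs⟩
      · rw [dif_neg hs]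
        have : ((s : ℕ) - i) + 1 ≤ ((q ⟨(s : ℕ) - i, by have := s.isLt; omega⟩) : ℕ) := by
          simpa using hqg ⟨(s : ℕ) - i, by have := s.isLt; omega⟩
        omega
    · intro s hs
      rw [hbval s, dif_pos hs]
      have := (p ⟨(s : ℕ), hs⟩).isLt
      omega
    · intro s hs
      rw [hbval s, dif_neg (by omega)]
      have : ((s : ℕ) - i) + 1 ≤ ((q ⟨(s : ℕ) - i, by have := s.isLt; omega⟩) : ℕ) := by
        simpa using hqg ⟨(s : ℕ) - i, by have := s.isLt; omega⟩
      omega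
  · -- left inverse
    intro j hj
    rw [Finset.mem_filter] at hj
    obtain ⟨hj1, hpre, hsuf⟩ := hj
    obtain ⟨hmono, hge⟩ := (mem_idxSet j).mp hj1
    funext s
    apply Fin.ext
    by_cases hs : (s : ℕ) < i
    · have h1 : ((bwd n k i hik hkn (fwd n k i hik hkn j) s) : ℕ) =
          min ((j (Fin.castLE hik ⟨(s : ℕ), hs⟩)) : ℕ) i := by
        simp only [bwd, fwd, dif_pos hs]
      rw [h1]
      have h2 : Fin.castLE hik ⟨(s : ℕ), hs⟩ = s := by
        apply Fin.ext; simp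
      rw [h2]
      have := hpre s hs
      omega
    · have h1 : ((bwd n k i hik hkn (fwd n k i hik hkn j) s) : ℕ) =
          min (((j ⟨i + ((s : ℕ) - i), by have := s.isLt; omega⟩) : ℕ) - (i + 1)) (n - i)
            + (i + 1) := by
        simp only [bwd, fwd, dif_neg hs]
      rw [h1]
      have h2 : (⟨i + ((s : ℕ) - i), by have := s.isLt; omega⟩ : Fin k) = s := by
        apply Fin.ext; simp; omega
      rw [h2]
      have h3 := hsuf s (by omega)
      have h4 := (j s).isLt
      omega
  · -- right inverse
    rintro ⟨p, q⟩ hpq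
    rw [Finset.mem_product, mem_idxSet, mem_idxSet] at hpq
    obtain ⟨⟨hpm, hpg⟩, hqm, hqg⟩ := hpq
    have hcast : ∀ s : Fin i, ((Fin.castLE hik s : Fin k) : ℕ) = (s : ℕ) := fun s => rfl
    refine Prod.ext ?_ ?_
    · funext s
      apply Fin.ext
      have hlt : ((Fin.castLE hik s : Fin k) : ℕ) < i := by rw [hcast]; exact s.isLt
      have h1 : (((fwd n k i hik hkn (bwd n k i hik hkn (p, q))).1 s) : ℕ) =
          min ((p ⟨((Fin.castLE hik s : Fin k) : ℕ), hlt⟩) : ℕ) i := by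
        simp only [fwd, bwd, dif_pos hlt]
      rw [h1]
      have h2 : (⟨((Fin.castLE hik s : Fin k) : ℕ), hlt⟩ : Fin i) = s := by
        apply Fin.ext; simp [hcast]
      rw [h2, show (p, q).1 = p from rfl]
      have := (p s).isLt
      omega
    · funext t
      apply Fin.ext
      have htk : i + (t : ℕ) < k := by have := t.isLt; omega
      have hnlt : ¬ (((⟨i + (t : ℕ), htk⟩ : Fin k) : ℕ) < i) := by simp
      have h1 : (((fwd n k i hik hkn (bwd n k i hik hkn (p, q))).2 t) : ℕ) =
          min (((q ⟨((⟨i + (t : ℕ), htk⟩ : Fin k) : ℕ) - i, by simp⟩) : ℕ) + (i + 1)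
            - (i + 1)) (n - i) := by
        simp only [fwd, bwd, dif_neg hnlt]
      rw [h1]
      have h2 : (⟨((⟨i + (t : ℕ), htk⟩ : Fin k) : ℕ) - i, by simp⟩ : Fin (k - i)) = t := by
        apply Fin.ext; simp
      rw [h2, show (p, q).2 = q from rfl]
      have := (q t).isLt
      omega
  · -- words match
    intro j hj
    rw [Finset.mem_filter] at hj
    obtain ⟨hj1, hpre, hsuf⟩ := hj
    obtain ⟨hmono, hge⟩ := (mem_idxSet j).mp hj1
    -- nat-valued version of j
    set v : ℕ → ℕ := fun m => if h : m < k then ((j ⟨m, h⟩) : ℕ) else 0 with hv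
    have hjv : ∀ (m : ℕ) (h : m < k), ((j ⟨m, h⟩) : ℕ) = v m := by
      intro m h
      rw [hv]
      show ((j ⟨m, h⟩) : ℕ) = if h' : m < k then ((j ⟨m, h'⟩) : ℕ) else 0
      rw [dif_pos h]
    have hvlt : ∀ m, m < k → v m < n + 2 := by
      intro m h; rw [← hjv m h]; exact (j ⟨m, h⟩).isLt
    have hpre' : ∀ m, m < i → v m ≤ i := by
      intro m h
      rw [← hjv m (by omega)]
      exact hpre ⟨m, by omega⟩ h
    have hsuf' : ∀ m, i ≤ m → ∀ h : m < k, m + 2 ≤ v m := by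
      intro m h hm
      rw [← hjv m hm]
      exact hsuf ⟨m, hm⟩ h
    have hv1 : ∀ s : Fin i, (((fwd n k i hik hkn j).1 s) : ℕ) = v (s : ℕ) := by
      intro s
      have h1 : ((j (Fin.castLE hik s)) : ℕ) = v (s : ℕ) := hjv (s : ℕ) (by have := s.isLt; omega)
      simp only [fwd]
      have := hpre' (s : ℕ) s.isLt
      omega
    have hv2 : ∀ t : Fin (k - i), (((fwd n k i hik hkn j).2 t) : ℕ)
        = v (i + (t : ℕ)) - (i + 1) := by
      intro t
      have htk : i + (t : ℕ) < k := by have := t.isLt; omega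
      have h1 : ((j ⟨i + (t : ℕ), by have := t.isLt; omega⟩) : ℕ) = v (i + (t : ℕ)) :=
        hjv (i + (t : ℕ)) htk
      simp only [fwd]
      rw [h1]
      have h2 := hvlt (i + (t : ℕ)) htk
      have h3 := hsuf' (i + (t : ℕ)) (by omega) htk
      omega
    show word j = word (fwd n k i hik hkn j).1 * T (word (fwd n k i hik hkn j).2)
    unfold word
    rw [map_list_prod, List.map_ofFn, ← List.prod_append]
    congr 1
    apply List.ext_getElem
    · simp; omega
    · intro m h1 h2
      simp only [List.getElem_ofFn, List.getElem_append, List.length_ofFn]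
      simp only [List.length_ofFn] at h1
      split_ifs with hmi
      · congr 1
        rw [hjv m h1, hv1 ⟨m, hmi⟩]
      · simp only [Function.comp_apply, T_ι]
        congr 1
        rw [hjv m h1, hv2 ⟨m - i, by omega⟩]
        show v m - m = v (i + (m - i)) - (i + 1) - (m - i) + 1
        rw [show i + (m - i) = m from by omega]
        have h3 := hsuf' m (by omega) h1
        omega

end CtilAux

theorem Ctil_shift_recursion (n k : ℕ) (hkn : k ≤ n) :
    Ctil (n + 1) k = ∑ i ∈ Finset.range (k + 1), Ctil i i * T (Ctil (n - i) (k - i)) := by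
  classical
  open CtilAux in
  rw [Ctil_eq]
  rw [show ∑ i ∈ Finset.range (k + 1), Ctil i i * T (Ctil (n - i) (k - i))
      = ∑ i ∈ Finset.range (k + 1), ∑ j ∈ (idxSet (n + 1) k).filter (P i), word j from
    Finset.sum_congr rfl fun i hi => by
      rw [piece n k i (by simpa using Nat.lt_succ_iff.mp (Finset.mem_range.mp hi)) hkn]]
  simp only [Finset.sum_filter]
  rw [Finset.sum_comm]
  refine Finset.sum_congr rfl fun j hj => ?_
  obtain ⟨i₀, ⟨hi₀r, hi₀P⟩, huniq⟩ := exists_unique_P j hj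
  have hfil : (Finset.range (k + 1)).filter (fun i => P i j) = {i₀} := by
    apply Finset.eq_singleton_iff_unique_mem.mpr
    constructor
    · exact Finset.mem_filter.mpr ⟨hi₀r, hi₀P⟩
    · intro x hx
      rcases Finset.mem_filter.mp hx with ⟨h1, h2⟩
      exact huniq x ⟨h1, h2⟩
  rw [← Finset.sum_filter, hfil, Finset.sum_singleton]
end

section
/- In the free ℤ-algebra ℤ⟨y_1, y_2, ...⟩, with C̃(n,k) the noncommutative truncated Catalan numbers and B(n,k) the noncommutative binomial coefficients of the first kind (B(n,k) = Σ_{j_1<...<j_k ⊆ [1,n]} y_{j_k+k−1}···y_{j_1}), one has Σ_{j=0}^{k} (−1)^j · C̃(n+k−j, j) · B(n−j, k−j) = 0 for all 0 < k ≤ n. -/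
/-- Noncommutative binomial coefficient of the first kind:
`B(n,k) = Σ_{J={j₁<⋯<j_k}⊆[1,n]} y_{j_k+k-1} ⋯ y_{j₂+1} y_{j₁}`. -/
noncomputable def ncBinom (n k : ℕ) : FreeAlgebra ℤ ℕ :=
  ∑ J ∈ Finset.powersetCard k (Finset.Icc 1 n),
    (((J.sort (· ≤ ·)).zipIdx.map (fun p => FreeAlgebra.ι ℤ (p.1 + p.2))).reverse).prod

namespace NCCatalan

/-- value of a tuple at a nat index, `0` out of range -/
def wv {N l : ℕ} (c : Fin l → Fin N) (s : ℕ) : ℕ := if h : s < l then (c ⟨s, h⟩ : ℕ) else 0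

lemma wv_lt {N l : ℕ} (c : Fin l → Fin N) {s : ℕ} (h : s < l) : wv c s = (c ⟨s, h⟩ : ℕ) :=
  dif_pos h

lemma wv_ge {N l : ℕ} (c : Fin l → Fin N) {s : ℕ} (h : ¬ s < l) : wv c s = 0 :=
  dif_neg h

lemma wv_fin {N l : ℕ} (c : Fin l → Fin N) (s : Fin l) : wv c (s : ℕ) = (c s : ℕ) := by
  rw [wv_lt c s.isLt]

lemma chainC {j N : ℕ} {c : Fin j → Fin N}
    (hB : ∀ s < j - 1, wv c s ≤ wv c (s + 1) + 1) :
    ∀ e s, s + e < j → wv c s ≤ wv c (s + e) + e := by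
  intro e
  induction e with
  | zero => intro s _; simp
  | succ d ih =>
    intro s h
    have h1 := hB (s + d) (by omega)
    have h2 := ih s (by omega)
    show wv c s ≤ wv c (s + d + 1) + (d + 1)
    omega

lemma chainD {l N j : ℕ} {w : Fin l → Fin N}
    (hD : ∀ t < l - 1, j ≤ t → wv w (t + 1) + 2 ≤ wv w t) :
    ∀ e t, j ≤ t → t + e < l → wv w (t + e) + 2 * e ≤ wv w t := by
  intro e
  induction e with
  | zero => intro t _ _; simp
  | succ d ih =>
    intro t ht h
    have h1 := hD (t + d) (by omega) (by omega)
    have h2 := ih t ht (by omega)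
    show wv w (t + d + 1) + 2 * (d + 1) ≤ wv w t
    omega

/-- word conditions for the `Ctil` part -/
def Pc (m j : ℕ) {N : ℕ} (c : Fin j → Fin N) : Prop :=
  (∀ s < j, 1 ≤ wv c s) ∧ (∀ s < j - 1, wv c s ≤ wv c (s + 1) + 1) ∧
    (0 < j → wv c (j - 1) + j ≤ m + 1)

instance {m j N : ℕ} : DecidablePred (fun c : Fin j → Fin N => Pc m j c) := fun c => by
  unfold Pc; infer_instance

/-- word conditions for the `ncBinom` part -/
def Pb (m κ : ℕ) {N : ℕ} (d : Fin κ → Fin N) : Prop :=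
  (∀ t < κ - 1, wv d (t + 1) + 2 ≤ wv d t) ∧ (0 < κ → 1 ≤ wv d (κ - 1)) ∧
    (0 < κ → wv d 0 + 1 ≤ m + κ)

instance {m κ N : ℕ} : DecidablePred (fun d : Fin κ → Fin N => Pb m κ d) := fun d => by
  unfold Pb; infer_instance

/-- merged conditions: split validity -/
def P (n k j : ℕ) (w : Fin k → Fin (n + k)) : Prop :=
  (∀ s < j, 1 ≤ wv w s) ∧
  (∀ s < j - 1, wv w s ≤ wv w (s + 1) + 1) ∧
  (0 < j → wv w (j - 1) + 2 * j ≤ n + k + 1) ∧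
  (∀ t < k - 1, j ≤ t → wv w (t + 1) + 2 ≤ wv w t) ∧
  (j < k → wv w j + 2 * j + 2 ≤ n + k + 1) ∧
  (j < k → 1 ≤ wv w (k - 1))

instance {n k j : ℕ} : DecidablePred (fun w : Fin k → Fin (n + k) => P n k j w) := fun w => by
  unfold P; infer_instance

instance {n k j : ℕ} (w : Fin k → Fin (n + k)) : Decidable (P n k j w) := by
  unfold P; infer_instance

noncomputable def monoF {N l : ℕ} (w : Fin l → Fin N) : FreeAlgebra ℤ ℕ :=
  (List.ofFn fun u => FreeAlgebra.ι ℤ ((w u : ℕ))).prod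

lemma Ctil_eq (m j N : ℕ) (hN : 0 < j → m < N) :
    Ctil m j = ∑ c ∈ Finset.univ.filter (fun c : Fin j → Fin N => Pc m j c), monoF c := by
  unfold Ctil
  refine Finset.sum_nbij'
    (fun i => fun s : Fin j => (⟨(i s : ℕ) - (s : ℕ), by
        have h1 := hN s.pos
        have h2 := (i s).isLt
        omega⟩ : Fin N))
    (fun c => fun s : Fin j => (⟨min ((c s : ℕ) + (s : ℕ)) m, by omega⟩ : Fin (m + 1)))
    ?_ ?_ ?_ ?_ ?_
  · intro i hi
    simp only [Finset.mem_filter, Finset.mem_univ, true_and] at hi ⊢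
    obtain ⟨hmono, hlb⟩ := hi
    refine ⟨?_, ?_, ?_⟩
    · intro s hs
      rw [wv_lt _ hs]
      have h1 := hlb ⟨s, hs⟩
      have hv : ((⟨s, hs⟩ : Fin j) : ℕ) = s := rfl
      show 1 ≤ (i ⟨s, hs⟩ : ℕ) - s
      omega
    · intro s hs
      have h01 : s < j := by omega
      have h11 : s + 1 < j := by omega
      rw [wv_lt _ h01, wv_lt _ h11]
      have hm := hmono ⟨s, h01⟩ ⟨s + 1, h11⟩ (Fin.mk_le_mk.mpr (by omega))
      rw [Fin.le_def] at hm
      have hb := hlb ⟨s + 1, h11⟩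
      show (i ⟨s, h01⟩ : ℕ) - s ≤ (i ⟨s + 1, h11⟩ : ℕ) - (s + 1) + 1
      have hb' : s + 2 ≤ (i ⟨s + 1, h11⟩ : ℕ) := hb
      have hm' : (i ⟨s, h01⟩ : ℕ) ≤ (i ⟨s + 1, h11⟩ : ℕ) := hm
      omega
    · intro hj0
      have hlast : j - 1 < j := by omega
      rw [wv_lt _ hlast]
      have h2 := (i ⟨j - 1, hlast⟩).isLt
      have hv : ((⟨j - 1, hlast⟩ : Fin j) : ℕ) = j - 1 := rfl
      show (i ⟨j - 1, hlast⟩ : ℕ) - (j - 1) + j ≤ m + 1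
      have h2' : (i ⟨j - 1, hlast⟩ : ℕ) < m + 1 := h2
      have h3 := hlb ⟨j - 1, hlast⟩
      omega
  · intro c hc
    simp only [Finset.mem_filter, Finset.mem_univ, true_and] at hc ⊢
    obtain ⟨h1, h2, h3⟩ := hc
    have hbnd : ∀ s : Fin j, (c s : ℕ) + (s : ℕ) ≤ m := by
      intro s
      have hsj := s.isLt
      have hchain := chainC h2 ((j - 1) - (s : ℕ)) (s : ℕ) (by omega)
      have he : (s : ℕ) + ((j - 1) - (s : ℕ)) = j - 1 := by omega
      rw [he, wv_fin] at hchain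
      have h3' := h3 s.pos
      omega
    constructor
    · intro s t hst
      rw [Fin.le_def] at hst ⊢
      have htj := t.isLt
      have hchain := chainC h2 ((t : ℕ) - (s : ℕ)) (s : ℕ) (by omega)
      have he : (s : ℕ) + ((t : ℕ) - (s : ℕ)) = (t : ℕ) := by omega
      rw [he, wv_fin, wv_fin] at hchain
      show min ((c s : ℕ) + (s : ℕ)) m ≤ min ((c t : ℕ) + (t : ℕ)) m
      have hbs := hbnd s
      have hbt := hbnd t
      omega
    · intro s
      have h1' := h1 (s : ℕ) s.isLt
      rw [wv_fin] at h1'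
      have hbs := hbnd s
      show (s : ℕ) + 1 ≤ min ((c s : ℕ) + (s : ℕ)) m
      omega
  · intro i hi
    simp only [Finset.mem_filter, Finset.mem_univ, true_and] at hi
    funext s
    apply Fin.ext
    have hb := hi.2 s
    have h2 := (i s).isLt
    show min (((i s : ℕ) - (s : ℕ)) + (s : ℕ)) m = (i s : ℕ)
    have h2' : (i s : ℕ) < m + 1 := h2
    omega
  · intro c hc
    simp only [Finset.mem_filter, Finset.mem_univ, true_and] at hc
    obtain ⟨h1, h2, h3⟩ := hc
    have hbnd : ∀ s : Fin j, (c s : ℕ) + (s : ℕ) ≤ m := by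
      intro s
      have hsj := s.isLt
      have hchain := chainC h2 ((j - 1) - (s : ℕ)) (s : ℕ) (by omega)
      have he : (s : ℕ) + ((j - 1) - (s : ℕ)) = j - 1 := by omega
      rw [he, wv_fin] at hchain
      have h3' := h3 s.pos
      omega
    funext s
    apply Fin.ext
    have hbs := hbnd s
    show min ((c s : ℕ) + (s : ℕ)) m - (s : ℕ) = (c s : ℕ)
    omega
  · intro i _
    rfl

def toW (m κ N : ℕ) (hN : 0 < κ → m + κ ≤ N) (J : Finset ℕ) : Fin κ → Fin N :=
  fun t => ⟨min ((J.sort (· ≤ ·)).getD (κ - 1 - (t : ℕ)) 0 + (κ - 1 - (t : ℕ))) (N - 1),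
    by have h1 := hN t.pos; have h2 := t.isLt; omega⟩

lemma toW_val (m κ N : ℕ) (hN : 0 < κ → m + κ ≤ N) (J : Finset ℕ)
    {t : ℕ} (ht : t < κ) {i : ℕ} (hi : i < (J.sort (· ≤ ·)).length) (he : κ - 1 - t = i)
    (hb : (J.sort (· ≤ ·))[i] + (κ - 1 - t) + 1 ≤ N) :
    wv (toW m κ N hN J) t = (J.sort (· ≤ ·))[i] + (κ - 1 - t) := by
  subst he
  rw [wv_lt _ ht]
  show min ((J.sort (· ≤ ·)).getD (κ - 1 - t) 0 + (κ - 1 - t)) (N - 1)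
      = (J.sort (· ≤ ·))[κ - 1 - t] + (κ - 1 - t)
  rw [List.getD_eq_getElem _ _ hi]
  omega

set_option maxHeartbeats 1000000 in
lemma ncBinom_eq (m κ N : ℕ) (hN : 0 < κ → m + κ ≤ N) :
    ncBinom m κ = ∑ d ∈ Finset.univ.filter (fun d : Fin κ → Fin N => Pb m κ d), monoF d := by
  unfold ncBinom
  refine Finset.sum_nbij' (fun J => toW m κ N hN J)
    (fun d => Finset.image (fun t : Fin κ => (d t : ℕ) + (t : ℕ) + 1 - κ) Finset.univ)
    ?_ ?_ ?_ ?_ ?_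
  · -- toW J satisfies Pb
    intro J hJ
    rw [Finset.mem_powersetCard] at hJ
    obtain ⟨hsub, hcard⟩ := hJ
    have hlen : (J.sort (· ≤ ·)).length = κ := by rw [Finset.length_sort]; exact hcard
    have helem : ∀ i, (hi : i < (J.sort (· ≤ ·)).length) →
        1 ≤ (J.sort (· ≤ ·))[i] ∧ (J.sort (· ≤ ·))[i] ≤ m := by
      intro i hi
      have h1 : (J.sort (· ≤ ·))[i] ∈ J := (Finset.mem_sort _).mp (List.getElem_mem hi)
      exact Finset.mem_Icc.mp (hsub h1)
    have hmono : ∀ i i', (hi : i < (J.sort (· ≤ ·)).length) → (hi' : i' < (J.sort (· ≤ ·)).length) →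
        i < i' → (J.sort (· ≤ ·))[i] < (J.sort (· ≤ ·))[i'] := by
      intro i i' hi hi' hlt
      exact List.pairwise_iff_getElem.mp (Finset.sortedLT_sort J).pairwise i i' hi hi' hlt
    simp only [Finset.mem_filter, Finset.mem_univ, true_and]
    refine ⟨?_, ?_, ?_⟩
    · intro t ht
      have hNκ := hN (by omega)
      have hv1 := toW_val m κ N hN J (show t < κ by omega) (i := κ - 1 - t)
        (by omega) rfl (by have := (helem (κ - 1 - t) (by omega)).2; omega)
      have hv2 := toW_val m κ N hN J (show t + 1 < κ by omega) (i := κ - 2 - t)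
        (by omega) (by omega) (by have := (helem (κ - 2 - t) (by omega)).2; omega)
      have hm := hmono (κ - 2 - t) (κ - 1 - t) (by omega) (by omega) (by omega)
      rw [hv1, hv2]
      omega
    · intro hκ
      have hNκ := hN hκ
      have hv := toW_val m κ N hN J (show κ - 1 < κ by omega) (i := 0)
        (by omega) (by omega) (by have := (helem 0 (by omega)).2; omega)
      rw [hv]
      have := (helem 0 (by omega)).1
      omega
    · intro hκ
      have hNκ := hN hκ
      have hv := toW_val m κ N hN J (show 0 < κ by omega) (i := κ - 1)
        (by omega) (by omega) (by have := (helem (κ - 1) (by omega)).2; omega)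
      rw [hv]
      have := (helem (κ - 1) (by omega)).2
      omega
  · -- image of d lands in powersetCard
    intro d hd
    simp only [Finset.mem_filter, Finset.mem_univ, true_and] at hd
    obtain ⟨b1, b2, b3⟩ := hd
    have hchain := chainD (l := κ) (j := 0) (w := d) (fun t' ht' _ => b1 t' ht')
    have hlow : ∀ t, t < κ → 1 + 2 * (κ - 1 - t) ≤ wv d t := by
      intro t ht
      have h1 := hchain (κ - 1 - t) t (by omega) (by omega)
      have he : t + (κ - 1 - t) = κ - 1 := by omega
      rw [he] at h1
      have h2 := b2 (by omega)
      omega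
    have hhigh : ∀ t, t < κ → wv d t + 2 * t + 1 ≤ m + κ := by
      intro t ht
      have h1 := hchain t 0 (by omega) (by omega)
      rw [Nat.zero_add] at h1
      have h2 := b3 (by omega)
      omega
    rw [Finset.mem_powersetCard]
    constructor
    · intro x hx
      rw [Finset.mem_image] at hx
      obtain ⟨t, -, rfl⟩ := hx
      have h1 := hlow (t : ℕ) t.isLt
      have h2 := hhigh (t : ℕ) t.isLt
      rw [wv_fin] at h1 h2
      rw [Finset.mem_Icc]
      have := t.isLt
      omega
    · rw [Finset.card_image_of_injective _ ?inj, Finset.card_univ, Fintype.card_fin]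
      case inj =>
        have hdec : ∀ a b : Fin κ, (a : ℕ) < (b : ℕ) →
            (d b : ℕ) + (b : ℕ) + 1 - κ < (d a : ℕ) + (a : ℕ) + 1 - κ := by
          intro a b hab
          have h1 := hchain ((b : ℕ) - (a : ℕ)) (a : ℕ) (by omega) (by have := b.isLt; omega)
          have he : (a : ℕ) + ((b : ℕ) - (a : ℕ)) = (b : ℕ) := by omega
          rw [he, wv_fin, wv_fin] at h1
          have h2 := hlow (b : ℕ) b.isLt
          rw [wv_fin] at h2
          omega
        intro a b hab
        have hab' : (d a : ℕ) + (a : ℕ) + 1 - κ = (d b : ℕ) + (b : ℕ) + 1 - κ := hab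
        by_contra hne
        have hne' : (a : ℕ) ≠ (b : ℕ) := fun h => hne (Fin.ext h)
        rcases Nat.lt_or_ge (a : ℕ) (b : ℕ) with h | h
        · have := hdec a b h; omega
        · have := hdec b a (by omega); omega
  · -- left inverse
    intro J hJ
    rw [Finset.mem_powersetCard] at hJ
    obtain ⟨hsub, hcard⟩ := hJ
    have hlen : (J.sort (· ≤ ·)).length = κ := by rw [Finset.length_sort]; exact hcard
    have helem : ∀ i, (hi : i < (J.sort (· ≤ ·)).length) →
        1 ≤ (J.sort (· ≤ ·))[i] ∧ (J.sort (· ≤ ·))[i] ≤ m := by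
      intro i hi
      have h1 : (J.sort (· ≤ ·))[i] ∈ J := (Finset.mem_sort _).mp (List.getElem_mem hi)
      exact Finset.mem_Icc.mp (hsub h1)
    ext x
    rw [Finset.mem_image]
    constructor
    · rintro ⟨t, -, rfl⟩
      have ht0 := t.isLt
      have hNκ := hN (by omega)
      have hv := toW_val m κ N hN J (t := (t : ℕ)) ht0 (i := κ - 1 - (t : ℕ)) (by omega) rfl
        (by have := (helem (κ - 1 - (t : ℕ)) (by omega)).2; omega)
      rw [wv_fin] at hv
      have hx : (toW m κ N hN J t : ℕ) + (t : ℕ) + 1 - κ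
          = (J.sort (· ≤ ·))[κ - 1 - (t : ℕ)]'(by omega) := by omega
      rw [hx]
      exact (Finset.mem_sort _).mp (List.getElem_mem _)
    · intro hxJ
      have hxL : x ∈ J.sort (· ≤ ·) := (Finset.mem_sort _).mpr hxJ
      obtain ⟨i, hi, hix⟩ := List.mem_iff_getElem.mp hxL
      have hiκ : i < κ := by omega
      have hNκ := hN (by omega)
      refine ⟨⟨κ - 1 - i, by omega⟩, Finset.mem_univ _, ?_⟩
      have hv := toW_val m κ N hN J (t := κ - 1 - i) (by omega) (i := i) hi (by omega)
        (by have := (helem i hi).2; omega)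
      have hw : wv (toW m κ N hN J) (κ - 1 - i)
          = (toW m κ N hN J ⟨κ - 1 - i, by omega⟩ : ℕ) := wv_lt _ (by omega)
      show (toW m κ N hN J ⟨κ - 1 - i, by omega⟩ : ℕ) + (κ - 1 - i) + 1 - κ = x
      rw [← hw, hv, ← hix]
      omega
  · -- right inverse
    intro d hd
    simp only [Finset.mem_filter, Finset.mem_univ, true_and] at hd
    obtain ⟨b1, b2, b3⟩ := hd
    rcases Nat.eq_zero_or_pos κ with hκ0 | hκ0
    · subst hκ0
      exact funext fun t => t.elim0
    have hNκ := hN hκ0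
    have hchain := chainD (l := κ) (j := 0) (w := d) (fun t' ht' _ => b1 t' ht')
    have hlow : ∀ t, t < κ → 1 + 2 * (κ - 1 - t) ≤ wv d t := by
      intro t ht
      have h1 := hchain (κ - 1 - t) t (by omega) (by omega)
      have he : t + (κ - 1 - t) = κ - 1 := by omega
      rw [he] at h1
      have h2 := b2 (by omega)
      omega
    have hdec : ∀ a b : Fin κ, (a : ℕ) < (b : ℕ) →
        (d b : ℕ) + (b : ℕ) + 1 - κ < (d a : ℕ) + (a : ℕ) + 1 - κ := by
      intro a b hab
      have h1 := hchain ((b : ℕ) - (a : ℕ)) (a : ℕ) (by omega) (by have := b.isLt; omega)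
      have he : (a : ℕ) + ((b : ℕ) - (a : ℕ)) = (b : ℕ) := by omega
      rw [he, wv_fin, wv_fin] at h1
      have h2 := hlow (b : ℕ) b.isLt
      rw [wv_fin] at h2
      omega
    have hsortEq : (Finset.image (fun t : Fin κ => (d t : ℕ) + (t : ℕ) + 1 - κ)
          Finset.univ).sort (· ≤ ·)
        = List.ofFn (fun u : Fin κ =>
            (d ⟨κ - 1 - (u : ℕ), by have := u.isLt; omega⟩ : ℕ)
              + (κ - 1 - (u : ℕ)) + 1 - κ) := by
      have hpw : List.Pairwise (· < ·) (List.ofFn (fun u : Fin κ =>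
          (d ⟨κ - 1 - (u : ℕ), by have := u.isLt; omega⟩ : ℕ)
            + (κ - 1 - (u : ℕ)) + 1 - κ)) := by
        rw [List.pairwise_iff_getElem]
        intro a b ha hb hab
        simp only [List.length_ofFn] at ha hb
        rw [List.getElem_ofFn, List.getElem_ofFn]
        exact hdec ⟨κ - 1 - b, by omega⟩ ⟨κ - 1 - a, by omega⟩ (by show κ - 1 - b < κ - 1 - a; omega)
      refine (fun hp hs => List.Perm.eq_of_pairwise' (Finset.pairwise_sort _ _) hs hp) ?_ ?_
      · refine List.perm_of_nodup_nodup_toFinset_eq (Finset.sort_nodup _ _)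
          (hpw.imp fun h => Nat.ne_of_lt h) ?_
        rw [Finset.sort_toFinset]
        ext x
        rw [Finset.mem_image, List.mem_toFinset, List.mem_ofFn]
        constructor
        · rintro ⟨t, -, rfl⟩
          refine ⟨⟨κ - 1 - (t : ℕ), by have := t.isLt; omega⟩, ?_⟩
          show (d ⟨κ - 1 - (κ - 1 - (t : ℕ)), _⟩ : ℕ) + (κ - 1 - (κ - 1 - (t : ℕ))) + 1 - κ
            = (d t : ℕ) + (t : ℕ) + 1 - κ
          have harg : ∀ (h : κ - 1 - (κ - 1 - (t : ℕ)) < κ),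
              (⟨κ - 1 - (κ - 1 - (t : ℕ)), h⟩ : Fin κ) = t := by
            intro h
            apply Fin.ext
            show κ - 1 - (κ - 1 - (t : ℕ)) = (t : ℕ)
            have := t.isLt
            omega
          rw [harg]
          have := t.isLt
          congr 1
          omega
        · rintro ⟨u, rfl⟩
          exact ⟨⟨κ - 1 - (u : ℕ), by have := u.isLt; omega⟩, Finset.mem_univ _, rfl⟩
      · rw [List.pairwise_iff_getElem]
        intro a b ha hb hab
        simp only [List.length_ofFn] at ha hb
        rw [List.getElem_ofFn, List.getElem_ofFn]
        exact le_of_lt (hdec ⟨κ - 1 - b, by omega⟩ ⟨κ - 1 - a, by omega⟩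
          (by show κ - 1 - b < κ - 1 - a; omega))
    funext t
    apply Fin.ext
    have ht0 := t.isLt
    show min (((Finset.image (fun t : Fin κ => (d t : ℕ) + (t : ℕ) + 1 - κ)
          Finset.univ).sort (· ≤ ·)).getD (κ - 1 - (t : ℕ)) 0 + (κ - 1 - (t : ℕ))) (N - 1)
        = (d t : ℕ)
    rw [hsortEq, List.getD_eq_getElem _ _ (by rw [List.length_ofFn]; omega), List.getElem_ofFn]
    have harg : ∀ (h : κ - 1 - ((⟨κ - 1 - (t : ℕ), by omega⟩ : Fin κ) : ℕ) < κ),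
        (⟨κ - 1 - ((⟨κ - 1 - (t : ℕ), by omega⟩ : Fin κ) : ℕ), h⟩ : Fin κ) = t := by
      intro h
      apply Fin.ext
      show κ - 1 - (κ - 1 - (t : ℕ)) = (t : ℕ)
      omega
    rw [harg]
    have h1 := hlow (t : ℕ) ht0
    rw [wv_fin] at h1
    have h2 := (d t).isLt
    have hv : ((⟨κ - 1 - (t : ℕ), by omega⟩ : Fin κ) : ℕ) = κ - 1 - (t : ℕ) := rfl
    omega
  · -- summand equality
    intro J hJ
    rw [Finset.mem_powersetCard] at hJ
    obtain ⟨hsub, hcard⟩ := hJ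
    have hlen : (J.sort (· ≤ ·)).length = κ := by rw [Finset.length_sort]; exact hcard
    have helem : ∀ i, (hi : i < (J.sort (· ≤ ·)).length) →
        1 ≤ (J.sort (· ≤ ·))[i] ∧ (J.sort (· ≤ ·))[i] ≤ m := by
      intro i hi
      have h1 : (J.sort (· ≤ ·))[i] ∈ J := (Finset.mem_sort _).mp (List.getElem_mem hi)
      exact Finset.mem_Icc.mp (hsub h1)
    have hnat : ((J.sort (· ≤ ·)).zipIdx.map (fun p => p.1 + p.2)).reverse
        = List.ofFn (fun t : Fin κ => (toW m κ N hN J t : ℕ)) := by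
      refine List.ext_getElem (by simp [hlen]) ?_
      intro u h1 h2
      simp only [List.length_reverse, List.length_map, List.length_zipIdx, hlen] at h1
      have hNκ := hN (by omega)
      rw [List.getElem_reverse, List.getElem_ofFn]
      simp only [List.length_map, List.length_zipIdx, hlen]
      rw [List.getElem_map, List.getElem_zipIdx]
      have hv := toW_val m κ N hN J (t := u) (by omega) (i := κ - 1 - u) (by omega) rfl
        (by have := (helem (κ - 1 - u) (by omega)).2; omega)
      rw [wv_lt _ (show u < κ by omega)] at hv
      rw [Nat.zero_add]
      exact hv.symm
    show ((J.sort (· ≤ ·)).zipIdx.map (fun p => FreeAlgebra.ι ℤ (p.1 + p.2))).reverse.prod = _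
    have hmapeq : ((J.sort (· ≤ ·)).zipIdx.map (fun p => FreeAlgebra.ι ℤ (p.1 + p.2))).reverse
        = (((J.sort (· ≤ ·)).zipIdx.map (fun p => p.1 + p.2)).reverse).map (FreeAlgebra.ι ℤ) := by
      rw [List.map_reverse, List.map_map]
      rfl
    rw [hmapeq, hnat, List.map_ofFn]
    rfl
def comb (k j N : ℕ) (hjk : j ≤ k) (c : Fin j → Fin N) (d : Fin (k - j) → Fin N) :
    Fin k → Fin N := fun u =>
  if h : (u : ℕ) < j then c ⟨u, h⟩ else d ⟨(u : ℕ) - j, by have := u.isLt; omega⟩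

lemma wv_comb_lt {k j N : ℕ} (hjk : j ≤ k) (c : Fin j → Fin N) (d : Fin (k - j) → Fin N)
    {s : ℕ} (hs : s < j) : wv (comb k j N hjk c d) s = wv c s := by
  have hsk : s < k := by omega
  rw [wv_lt _ hsk, wv_lt _ hs, comb, dif_pos hs]

lemma wv_comb_ge {k j N : ℕ} (hjk : j ≤ k) (c : Fin j → Fin N) (d : Fin (k - j) → Fin N)
    {s : ℕ} (hs : j ≤ s) : wv (comb k j N hjk c d) s = wv d (s - j) := by
  by_cases hsk : s < k
  · have h2 : s - j < k - j := by omega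
    rw [wv_lt _ hsk, wv_lt _ h2, comb, dif_neg (Nat.not_lt.mpr (hs : j ≤ ((⟨s, hsk⟩ : Fin k) : ℕ)))]
  · rw [wv_ge _ hsk, wv_ge _ (by omega)]

def cOf (k j N : ℕ) (hjk : j ≤ k) (w : Fin k → Fin N) : Fin j → Fin N :=
  fun s => w ⟨s, by have := s.isLt; omega⟩

def dOf (k j N : ℕ) (hjk : j ≤ k) (w : Fin k → Fin N) : Fin (k - j) → Fin N :=
  fun t => w ⟨j + t, by have := t.isLt; omega⟩

lemma wv_cOf {k j N : ℕ} (hjk : j ≤ k) (w : Fin k → Fin N) {s : ℕ} (hs : s < j) :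
    wv (cOf k j N hjk w) s = wv w s := by
  rw [wv_lt _ hs, wv_lt _ (show s < k by omega)]
  rfl

lemma wv_dOf {k j N : ℕ} (hjk : j ≤ k) (w : Fin k → Fin N) {t : ℕ} (ht : t < k - j) :
    wv (dOf k j N hjk w) t = wv w (j + t) := by
  rw [wv_lt _ ht, wv_lt _ (show j + t < k by omega)]
  rfl

lemma monoF_comb {N k j : ℕ} (hjk : j ≤ k) (c : Fin j → Fin N) (d : Fin (k - j) → Fin N) :
    monoF c * monoF d = monoF (comb k j N hjk c d) := by
  unfold monoF
  rw [← List.prod_append]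
  congr 1
  refine List.ext_getElem ?_ ?_
  · simp only [List.length_append, List.length_ofFn]
    omega
  · intro u h1 h2
    simp only [List.length_append, List.length_ofFn] at h1
    rw [List.getElem_ofFn]
    by_cases hu : u < j
    · rw [List.getElem_append_left (by simp only [List.length_ofFn]; omega)]
      rw [List.getElem_ofFn]
      simp [comb, hu]
    · rw [List.getElem_append_right (by simp only [List.length_ofFn]; omega)]
      rw [List.getElem_ofFn]
      simp [comb, hu]

lemma step (n k j : ℕ) (hk : 0 < k) (hkn : k ≤ n) (hjk : j ≤ k) :
    Ctil (n + k - j) j * ncBinom (n - j) (k - j)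
      = ∑ w ∈ Finset.univ.filter (fun w : Fin k → Fin (n + k) => P n k j w), monoF w := by
  rw [Ctil_eq (n + k - j) j (n + k) (fun h0 => by omega),
      ncBinom_eq (n - j) (k - j) (n + k) (fun h0 => by omega),
      Finset.sum_mul_sum, ← Finset.sum_product']
  refine Finset.sum_nbij'
    (fun cd => comb k j (n + k) hjk cd.1 cd.2)
    (fun w => (cOf k j (n + k) hjk w, dOf k j (n + k) hjk w))
    ?_ ?_ ?_ ?_ ?_
  · intro cd hcd
    simp only [Finset.mem_product, Finset.mem_filter, Finset.mem_univ, true_and] at hcd ⊢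
    obtain ⟨⟨c1, c2, c3⟩, b1, b2, b3⟩ := hcd
    refine ⟨?_, ?_, ?_, ?_, ?_, ?_⟩
    · intro s hs
      rw [wv_comb_lt hjk _ _ hs]
      exact c1 s hs
    · intro s hs
      rw [wv_comb_lt hjk _ _ (show s < j by omega), wv_comb_lt hjk _ _ (show s + 1 < j by omega)]
      exact c2 s hs
    · intro hj0
      rw [wv_comb_lt hjk _ _ (show j - 1 < j by omega)]
      have := c3 hj0
      omega
    · intro t ht hjt
      rw [wv_comb_ge hjk _ _ (show j ≤ t + 1 by omega), wv_comb_ge hjk _ _ hjt]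
      have hb := b1 (t - j) (by omega)
      have e : t - j + 1 = t + 1 - j := by omega
      rw [e] at hb
      exact hb
    · intro hjklt
      rw [wv_comb_ge hjk _ _ (le_refl j)]
      have := b3 (by omega)
      have e : j - j = 0 := by omega
      rw [e]
      omega
    · intro hjklt
      rw [wv_comb_ge hjk _ _ (show j ≤ k - 1 by omega)]
      have := b2 (by omega)
      have e : k - 1 - j = k - j - 1 := by omega
      rw [e]
      exact this
  · intro w hw
    simp only [Finset.mem_filter, Finset.mem_univ, true_and] at hw
    obtain ⟨p1, p2, p3, p4, p5, p6⟩ := hw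
    simp only [Finset.mem_product, Finset.mem_filter, Finset.mem_univ, true_and]
    refine ⟨⟨?_, ?_, ?_⟩, ?_, ?_, ?_⟩
    · intro s hs
      rw [wv_cOf hjk _ hs]
      exact p1 s hs
    · intro s hs
      rw [wv_cOf hjk _ (show s < j by omega), wv_cOf hjk _ (show s + 1 < j by omega)]
      exact p2 s hs
    · intro hj0
      rw [wv_cOf hjk _ (show j - 1 < j by omega)]
      have := p3 hj0
      omega
    · intro t ht
      rw [wv_dOf hjk _ (show t + 1 < k - j by omega), wv_dOf hjk _ (show t < k - j by omega)]
      have hb := p4 (j + t) (by omega) (by omega)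
      have e : j + t + 1 = j + (t + 1) := by omega
      rw [e] at hb
      exact hb
    · intro hkj0
      rw [wv_dOf hjk _ (show k - j - 1 < k - j by omega)]
      have := p6 (by omega)
      have e : j + (k - j - 1) = k - 1 := by omega
      rw [e]
      exact this
    · intro hkj0
      rw [wv_dOf hjk _ (show 0 < k - j by omega)]
      have := p5 (by omega)
      have e : j + 0 = j := by omega
      rw [e]
      omega
  · intro cd hcd
    refine Prod.ext ?_ ?_
    · funext s
      show comb k j (n + k) hjk cd.1 cd.2 ⟨s, _⟩ = cd.1 s
      rw [comb, dif_pos (show ((⟨(s : ℕ), _⟩ : Fin k) : ℕ) < j from s.isLt)]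
    · funext t
      show comb k j (n + k) hjk cd.1 cd.2 ⟨j + t, _⟩ = cd.2 t
      rw [comb, dif_neg (show ¬ ((⟨j + (t : ℕ), _⟩ : Fin k) : ℕ) < j by simp)]
      exact congrArg cd.2 (Fin.ext (by show j + (t : ℕ) - j = (t : ℕ); omega))
  · intro w hw
    funext u
    show comb k j (n + k) hjk _ _ u = w u
    rw [comb]
    by_cases hu : (u : ℕ) < j
    · rw [dif_pos hu]
      exact congrArg w (Fin.ext rfl)
    · rw [dif_neg hu]
      exact congrArg w (Fin.ext (by show j + ((u : ℕ) - j) = (u : ℕ); omega))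
  · intro cd _
    exact monoF_comb hjk cd.1 cd.2

lemma not_P_of_gt {n k j : ℕ} {w : Fin k → Fin (n + k)} (h : k < j) : ¬ P n k j w := by
  intro hp
  have h1 := hp.1 k h
  rw [wv_ge _ (lt_irrefl k)] at h1
  omega

lemma lemUp {n k j : ℕ} {w : Fin k → Fin (n + k)} (hjk : j < k) (h : P n k j w)
    (hα : j = 0 ∨ wv w (j - 1) ≤ wv w j + 1) : P n k (j + 1) w := by
  obtain ⟨A, B, C, D, E, F⟩ := h
  refine ⟨?_, ?_, ?_, ?_, ?_, ?_⟩
  · intro s hs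
    rcases Nat.lt_or_ge s j with h' | h'
    · exact A s h'
    · have hsj : s = j := by omega
      subst hsj
      have hD := chainD D (k - 1 - s) s (le_refl s) (by omega)
      have he : s + (k - 1 - s) = k - 1 := by omega
      rw [he] at hD
      have := F hjk
      omega
  · intro s hs
    rcases Nat.lt_or_ge s (j - 1) with h' | h'
    · exact B s h'
    · have hj0 : 0 < j := by omega
      have hsj : s = j - 1 := by omega
      subst hsj
      have he : j - 1 + 1 = j := by omega
      rw [he]
      exact hα.resolve_left (by omega)
  · intro _
    have := E hjk
    have he : j + 1 - 1 = j := by omega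
    rw [he]
    omega
  · intro t ht hjt
    exact D t ht (by omega)
  · intro h2
    have h1 := D j (by omega) (le_refl j)
    have := E hjk
    omega
  · intro _
    exact F hjk

lemma lemDown {n k j : ℕ} {w : Fin k → Fin (n + k)} (hj0 : 0 < j) (hjk : j ≤ k)
    (h : P n k j w) (hβ : j = k ∨ wv w j + 2 ≤ wv w (j - 1)) : P n k (j - 1) w := by
  obtain ⟨A, B, C, D, E, F⟩ := h
  refine ⟨?_, ?_, ?_, ?_, ?_, ?_⟩
  · intro s hs; exact A s (by omega)
  · intro s hs; exact B s (by omega)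
  · intro h1
    have hB := B (j - 2) (by omega)
    have hC := C hj0
    have e1 : j - 2 + 1 = j - 1 := by omega
    rw [e1] at hB
    have e2 : j - 1 - 1 = j - 2 := by omega
    rw [e2]
    omega
  · intro t ht hjt
    rcases Nat.lt_or_ge t j with h' | h'
    · have htj : t = j - 1 := by omega
      have hjklt : j < k := by omega
      have hb := hβ.resolve_left (by omega)
      subst htj
      have e1 : j - 1 + 1 = j := by omega
      rw [e1]
      exact hb
    · exact D t ht h'
  · intro h1
    have := C hj0
    omega
  · intro h1
    rcases Nat.lt_or_ge j k with h' | h'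
    · exact F h'
    · have := A (k - 1) (by omega)
      exact this
  
lemma lemNotBoth {n k j : ℕ} {w : Fin k → Fin (n + k)} (hj0 : 0 < j)
    (hdown : P n k (j - 1) w) (hup : P n k (j + 1) w) : False := by
  have hjk : j < k := by
    by_contra hcon
    exact not_P_of_gt (by omega) hup
  have h1 := hup.2.1 (j - 1) (by omega)
  have e1 : j - 1 + 1 = j := by omega
  rw [e1] at h1
  have h2 := hdown.2.2.2.1 (j - 1) (by omega) (le_refl _)
  rw [e1] at h2
  omega

lemma lemO {n k j : ℕ} {w : Fin k → Fin (n + k)} (hk : 0 < k) (hjk : j ≤ k)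
    (h : P n k j w) (hup : ¬ P n k (j + 1) w) : 0 < j ∧ P n k (j - 1) w := by
  have hj0 : 0 < j := by
    rcases Nat.eq_zero_or_pos j with h0 | h0
    · subst h0
      exact absurd (lemUp hk h (Or.inl rfl)) hup
    · exact h0
  refine ⟨hj0, ?_⟩
  rcases Nat.lt_or_ge j k with hlt | hge
  · refine lemDown hj0 hjk h (Or.inr ?_)
    by_contra hc
    exact hup (lemUp hlt h (Or.inr (by omega)))
  · exact lemDown hj0 hjk h (Or.inl (by omega))

end NCCatalan

open NCCatalan in
theorem alternating_Ctil_ncBinom (n k : ℕ) (hk : 0 < k) (hkn : k ≤ n) :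
    ∑ j ∈ Finset.range (k + 1),
      ((-1 : ℤ) ^ j) • (Ctil (n + k - j) j * ncBinom (n - j) (k - j)) = 0 := by
  have hstep : ∀ j ∈ Finset.range (k + 1),
      ((-1 : ℤ) ^ j) • (Ctil (n + k - j) j * ncBinom (n - j) (k - j))
        = ∑ w ∈ Finset.univ.filter (fun w : Fin k → Fin (n + k) => P n k j w),
            ((-1 : ℤ) ^ j) • monoF w := by
    intro j hj
    rw [step n k j hk hkn (by simpa using Nat.lt_succ_iff.mp (Finset.mem_range.mp hj)),
      Finset.smul_sum]
  rw [Finset.sum_congr rfl hstep, Finset.sum_sigma']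
  refine Finset.sum_involution
    (fun a _ => if P n k (a.1 + 1) a.2 then ⟨a.1 + 1, a.2⟩ else ⟨a.1 - 1, a.2⟩)
    ?_ ?_ ?_ ?_
  · -- sums to zero
    intro a ha
    simp only [Finset.mem_sigma, Finset.mem_range, Finset.mem_filter] at ha
    obtain ⟨hj, -, hP⟩ := ha
    beta_reduce
    by_cases hup : P n k (a.1 + 1) a.2
    · rw [if_pos hup]
      show ((-1 : ℤ) ^ a.1) • monoF a.2 + ((-1 : ℤ) ^ (a.1 + 1)) • monoF a.2 = 0
      rw [← add_smul]
      have : ((-1 : ℤ) ^ a.1 + (-1 : ℤ) ^ (a.1 + 1)) = 0 := by ring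
      rw [this, zero_smul]
    · rw [if_neg hup]
      obtain ⟨hj0, -⟩ := lemO hk (by omega) hP hup
      show ((-1 : ℤ) ^ a.1) • monoF a.2 + ((-1 : ℤ) ^ (a.1 - 1)) • monoF a.2 = 0
      rw [← add_smul]
      have e : a.1 = (a.1 - 1) + 1 := by omega
      rw [e, Nat.add_sub_cancel]
      have : ((-1 : ℤ) ^ (a.1 - 1 + 1) + (-1 : ℤ) ^ (a.1 - 1)) = 0 := by ring
      rw [this, zero_smul]
  · -- g a ≠ a
    intro a ha _
    beta_reduce
    by_cases hup : P n k (a.1 + 1) a.2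
    · rw [if_pos hup]
      intro e
      have := congrArg Sigma.fst e
      simp at this
    · rw [if_neg hup]
      simp only [Finset.mem_sigma, Finset.mem_range, Finset.mem_filter] at ha
      obtain ⟨hj0, -⟩ := lemO hk (by omega) ha.2.2 hup
      intro e
      have := congrArg Sigma.fst e
      simp only at this
      omega
  · -- g a ∈ s
    intro a ha
    have ha' := ha
    simp only [Finset.mem_sigma, Finset.mem_range, Finset.mem_filter] at ha'
    obtain ⟨hj, -, hP⟩ := ha'
    beta_reduce
    by_cases hup : P n k (a.1 + 1) a.2
    · rw [if_pos hup]
      have hlt : a.1 + 1 ≤ k := by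
        by_contra hcon
        exact not_P_of_gt (by omega) hup
      exact Finset.mem_sigma.mpr ⟨Finset.mem_range.mpr (by omega : a.1 + 1 < k + 1),
        Finset.mem_filter.mpr ⟨Finset.mem_univ _, hup⟩⟩
    · rw [if_neg hup]
      obtain ⟨hj0, hdn⟩ := lemO hk (by omega) hP hup
      exact Finset.mem_sigma.mpr ⟨Finset.mem_range.mpr (by omega : a.1 - 1 < k + 1),
        Finset.mem_filter.mpr ⟨Finset.mem_univ _, hdn⟩⟩
  · -- involution
    intro a ha
    simp only [Finset.mem_sigma, Finset.mem_range, Finset.mem_filter] at ha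
    obtain ⟨hj, -, hP⟩ := ha
    beta_reduce
    by_cases hup : P n k (a.1 + 1) a.2
    · rw [if_pos hup]
      have hnot : ¬ P n k (a.1 + 1 + 1) a.2 := by
        intro h2
        exact lemNotBoth (j := a.1 + 1) (by omega) (by simpa using hP) h2
      rw [if_neg hnot]
      rfl
    · rw [if_neg hup]
      obtain ⟨hj0, hdn⟩ := lemO hk (by omega) hP hup
      have e : a.1 - 1 + 1 = a.1 := by omega
      rw [e, if_pos hP]
end
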